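/- arXiv:2204.02882 — 7 statements merged into one kernel-verified Lean document; each statement's English description precedes it below -/
import Mathlib

section
/- Let X be a continuum (compact connected metric space) and K a subcontinuum of X. If K is not ample, then there exists a nowhere dense subcontinuum of X that intersects both K and the complement X \ K. -/
open Set Topology

/-- The meager composant of `x`: the union of all nowhere dense subcontinua containing `x`. -/
def MeagerComposant (X : Type) [TopologicalSpace X] (x : X) : Set X :=
  ⋃₀ {L : Set X | IsCompact L ∧ IsConnected L ∧ IsNowhereDense L ∧ x ∈ L}

/-- A continuum is hereditarily unicoherent if the intersection of any two subcontinua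
is connected (possibly empty, hence preconnected). -/
def HereditarilyUnicoherent (X : Type) [TopologicalSpace X] : Prop :=
  ∀ A B : Set X, IsCompact A → IsConnected A → IsCompact B → IsConnected B →
    IsPreconnected (A ∩ B)

/-- A subcontinuum `A` of `X` is ample if every open neighborhood of `A` contains a
subcontinuum having `A` in its interior. -/
def Ample {X : Type} [TopologicalSpace X] (A : Set X) : Prop :=
  ∀ U : Set X, IsOpen U → A ⊆ U →
    ∃ K : Set X, IsCompact K ∧ IsPreconnected K ∧ A ⊆ interior K ∧ K ⊆ U

/-- A set `C` is indecomposable if it is not the union of two proper subcontinua. -/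
def IndecomposableSet {X : Type} [TopologicalSpace X] (C : Set X) : Prop :=
  ¬ ∃ H K : Set X, IsCompact H ∧ IsConnected H ∧ IsCompact K ∧ IsConnected K ∧
    H ⊆ C ∧ K ⊆ C ∧ H ≠ C ∧ K ≠ C ∧ H ∪ K = C

/-- In a compact T2 space, if the connected component of a point is contained in an open
set, then some clopen neighborhood of the point is contained in that open set. -/
lemma exists_isClopen_subset_of_connectedComponent_subset {Y : Type*} [TopologicalSpace Y]
    [T2Space Y] [CompactSpace Y] {y : Y} {U : Set Y}
    (hU : IsOpen U) (h : connectedComponent y ⊆ U) :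
    ∃ Z : Set Y, IsClopen Z ∧ y ∈ Z ∧ Z ⊆ U := by
  have key := connectedComponent_eq_iInter_isClopen y
  obtain ⟨t, ht⟩ := (hU.isClosed_compl.isCompact).elim_finite_subfamily_closed
      (fun s : { s : Set Y // IsClopen s ∧ y ∈ s } => (s : Set Y))
      (fun s => s.2.1.1) (by
        rw [← key, eq_empty_iff_forall_notMem]
        rintro a ⟨ha1, ha2⟩
        exact ha1 (h ha2))
  refine ⟨⋂ s ∈ t, (s : Set Y), ?_, ?_, ?_⟩
  · exact isClopen_biInter_finset fun s _ => s.2.1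
  · exact mem_iInter₂.mpr fun s _ => s.2.2
  · intro a ha
    by_contra hA
    rw [eq_empty_iff_forall_notMem] at ht
    exact ht a ⟨hA, ha⟩

/-- Separation of a connected component of a closed set inside an open set by a
relatively clopen set. -/
lemma exists_relClopen_subset {X : Type} [MetricSpace X] [CompactSpace X] {A V : Set X}
    (hA : IsClosed A) (hV : IsOpen V) {z : X} (hz : z ∈ A)
    (h : connectedComponentIn A z ⊆ V) :
    ∃ P O : Set X, IsOpen O ∧ P = O ∩ A ∧ IsClosed P ∧
      connectedComponentIn A z ⊆ P ∧ P ⊆ V := by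
  haveI : CompactSpace A := isCompact_iff_compactSpace.mp hA.isCompact
  have himg := connectedComponentIn_eq_image hz
  have hsub : connectedComponent (⟨z, hz⟩ : A) ⊆ (Subtype.val ⁻¹' V) := by
    intro a ha
    exact h (himg ▸ mem_image_of_mem _ ha)
  obtain ⟨Z, hZclopen, hZmem, hZV⟩ :=
    exists_isClopen_subset_of_connectedComponent_subset
      (hV.preimage continuous_subtype_val) hsub
  obtain ⟨O, hOopen, hOZ⟩ := isOpen_induced_iff.mp hZclopen.2
  refine ⟨Subtype.val '' Z, O, hOopen, ?_, ?_, ?_, ?_⟩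
  · rw [← hOZ, Subtype.image_preimage_coe, inter_comm]
  · exact (hZclopen.1.isCompact.image continuous_subtype_val).isClosed
  · rw [himg]; exact image_mono (hZclopen.connectedComponent_subset hZmem)
  · rintro a ⟨b, hb, rfl⟩; exact hZV hb

/-- A preconnected subset of `A` meeting a relatively clopen subset `P` of `A`
is contained in `P`. -/
lemma precon_subset_of_relClopen {X : Type} [TopologicalSpace X] {A P O s : Set X}
    (hO : IsOpen O) (hPO : P = O ∩ A) (hPc : IsClosed P) (hs : IsPreconnected s)
    (hsA : s ⊆ A) (hsP : (s ∩ P).Nonempty) : s ⊆ P := by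
  by_contra hns
  obtain ⟨a, has, haP⟩ := not_subset.mp hns
  have hcover : s ⊆ O ∪ Pᶜ := by
    intro b hb
    by_cases hbP : b ∈ P
    · exact Or.inl (hPO ▸ hbP).1
    · exact Or.inr hbP
  have hOne : (s ∩ O).Nonempty := by
    obtain ⟨b, hbs, hbP⟩ := hsP
    exact ⟨b, hbs, (hPO ▸ hbP).1⟩
  have := hs O Pᶜ hO hPc.isOpen_compl hcover hOne ⟨a, has, haP⟩
  obtain ⟨b, hbs, hbO, hbP⟩ := this
  exact hbP (hPO ▸ ⟨hbO, hsA hbs⟩)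

/-- The connected component in a closed subset of a compact metric space is closed. -/
lemma isClosed_connectedComponentIn' {X : Type} [MetricSpace X] [CompactSpace X] {F : Set X}
    (hF : IsClosed F) (x : X) : IsClosed (connectedComponentIn F x) := by
  by_cases hx : x ∈ F
  · haveI : CompactSpace F := isCompact_iff_compactSpace.mp hF.isCompact
    rw [connectedComponentIn_eq_image hx]
    exact (isClosed_connectedComponent.isCompact.image continuous_subtype_val).isClosed
  · rw [connectedComponentIn_eq_empty hx]
    exact isClosed_empty

/-- If a subcontinuum `K` of a continuum `X` is not ample, then some nowhere dense
subcontinuum of `X` meets both `K` and `X \\ K`. -/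
theorem not_ample_exists_nowhereDense_meeting (X : Type) [MetricSpace X] [CompactSpace X] [ConnectedSpace X] [Nonempty X]
    (K : Set X) (hKc : IsCompact K) (hKconn : IsConnected K) (hK : ¬ Ample K) :
    ∃ L : Set X, IsCompact L ∧ IsConnected L ∧ IsNowhereDense L ∧
      (L ∩ K).Nonempty ∧ (L ∩ Kᶜ).Nonempty := by
  unfold Ample at hK
  push_neg at hK
  obtain ⟨U, hUopen, hKU, hW⟩ := hK
  -- `U ≠ univ`
  obtain ⟨p, hp⟩ : ∃ p, p ∉ U := by
    by_contra h
    push_neg at h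
    exact absurd (fun x _ => h x : univ ⊆ U)
      (hW univ isCompact_univ isPreconnected_univ (by simp))
  -- squeeze an open set `V` between `K` and `U`
  obtain ⟨V, hVopen, hKV, hVU⟩ :=
    normal_exists_closure_subset hKc.isClosed hUopen hKU
  -- the union of all subcontinua of `closure V` meeting `K`
  set 𝒞 : Set (Set X) :=
    {L | IsCompact L ∧ IsPreconnected L ∧ L ⊆ closure V ∧ (L ∩ K).Nonempty} with h𝒞
  set W : Set X := ⋃₀ 𝒞 with hWdef
  have hK𝒞 : K ∈ 𝒞 :=
    ⟨hKc, hKconn.isPreconnected, hKV.trans subset_closure,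
      by rw [inter_self]; exact hKconn.nonempty⟩
  have hKW : K ⊆ W := subset_sUnion_of_mem hK𝒞
  have hWV : W ⊆ closure V := sUnion_subset fun L hL => hL.2.2.1
  -- absorption: a subcontinuum of `closure V` meeting `W` lies in `W`
  have absorb : ∀ s : Set X, IsCompact s → IsPreconnected s → s ⊆ closure V →
      (s ∩ W).Nonempty → s ⊆ W := by
    intro s hsc hsp hsV ⟨y, hys, hyW⟩
    obtain ⟨L, hL𝒞, hyL⟩ := hyW
    have hmem : s ∪ L ∈ 𝒞 :=
      ⟨hsc.union hL𝒞.1, hsp.union y hys hyL hL𝒞.2.1,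
        union_subset hsV hL𝒞.2.2.1, hL𝒞.2.2.2.mono (inter_subset_inter_left K subset_union_right)⟩
    exact subset_union_left.trans (subset_sUnion_of_mem hmem)
  -- `W` is preconnected
  obtain ⟨k0, hk0⟩ := hKconn.nonempty
  have hWprecon : IsPreconnected W := by
    apply isPreconnected_of_forall (x := k0)
    intro y hy
    obtain ⟨L, hL𝒞, hyL⟩ := hy
    obtain ⟨w, hwL, hwK⟩ := hL𝒞.2.2.2
    exact ⟨L ∪ K, union_subset (subset_sUnion_of_mem hL𝒞) hKW,
      Or.inr hk0, Or.inl hyL, hL𝒞.2.1.union w hwL hwK hKconn.isPreconnected⟩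
  -- `closure W` is a subcontinuum of `U` containing `K`,
  -- so by the non-ampleness witness, `K ⊄ interior (closure W)`
  have hclWU : closure W ⊆ U := by
    calc closure W ⊆ closure (closure V) := closure_mono hWV
    _ = closure V := closure_closure
    _ ⊆ U := hVU
  have hint : ¬ K ⊆ interior (closure W) := fun h =>
    hW (closure W) isClosed_closure.isCompact hWprecon.closure h hclWU
  obtain ⟨x, hxK, hxint⟩ := not_subset.mp hint
  have hxV : x ∈ V := hKV hxK
  -- choose `z n → x` with `z n ∈ V \ closure W`
  have hx' : x ∈ closure (closure W)ᶜ := by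
    rw [closure_compl, mem_compl_iff]
    exact hxint
  have hzex : ∀ n : ℕ, ∃ z, (z ∈ V ∧ z ∉ closure W) ∧ dist z x < 1 / (n + 1) := by
    intro n
    have hpos : (0 : ℝ) < 1 / (n + 1) := by positivity
    obtain ⟨z, ⟨hz1, hz2⟩, hz3⟩ := mem_closure_iff.mp hx' (V ∩ Metric.ball x (1 / (n + 1)))
      (hVopen.inter Metric.isOpen_ball) ⟨hxV, Metric.mem_ball_self hpos⟩
    exact ⟨z, ⟨hz1, hz3⟩, Metric.mem_ball.mp hz2⟩
  choose z hz hzdist using hzex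
  have hzV : ∀ n, z n ∈ V := fun n => (hz n).1
  have hzW : ∀ n, z n ∉ closure W := fun n => (hz n).2
  have htend : Filter.Tendsto z Filter.atTop (𝓝 x) := by
    rw [tendsto_iff_dist_tendsto_zero]
    apply squeeze_zero (fun n => dist_nonneg) (fun n => (hzdist n).le)
    exact tendsto_one_div_add_atTop_nhds_zero_nat
  -- the components `E n` of `z n` in `closure V`
  set E : ℕ → Set X := fun n => connectedComponentIn (closure V) (z n) with hEdef
  have hzE : ∀ n, z n ∈ E n := fun n => mem_connectedComponentIn (subset_closure (hzV n))
  have hEV : ∀ n, E n ⊆ closure V := fun n => connectedComponentIn_subset _ _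
  have hEclosed : ∀ n, IsClosed (E n) := fun n => isClosed_connectedComponentIn' isClosed_closure _
  have hEprecon : ∀ n, IsPreconnected (E n) := fun n => isPreconnected_connectedComponentIn
  -- claim 1: `E n` misses `W`
  have hEW : ∀ n, (E n ∩ W) = ∅ := by
    intro n
    by_contra h
    have : E n ⊆ W := absorb (E n) ((hEclosed n).isCompact) (hEprecon n) (hEV n)
      (nonempty_iff_ne_empty.mpr h)
    exact hzW n (subset_closure (this (hzE n)))
  -- claim 2 (boundary bumping): `E n` is not contained in `V`
  have hEnV : ∀ n, ¬ E n ⊆ V := by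
    intro n hEn
    obtain ⟨P, O, hOopen, hPO, hPclosed, hcompP, hPV⟩ :=
      exists_relClopen_subset isClosed_closure hVopen (subset_closure (hzV n)) hEn
    have hPopen : IsOpen P := by
      have : P = O ∩ V := by
        apply Subset.antisymm
        · intro a ha
          exact ⟨(hPO ▸ ha).1, hPV ha⟩
        · intro a ha
          rw [hPO]
          exact ⟨ha.1, subset_closure ha.2⟩
      rw [this]
      exact hOopen.inter hVopen
    rcases isClopen_iff.mp ⟨hPclosed, hPopen⟩ with h | h
    · exact absurd (hcompP (hzE n)) (h ▸ notMem_empty _)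
    · exact hp (hVU (subset_closure (hPV (h ▸ mem_univ p))))
  -- the limit set
  set A0 : Set X := closure (⋃ n, E n) with hA0def
  have hEA0 : ∀ n, E n ⊆ A0 := fun n => (subset_iUnion E n).trans subset_closure
  have hxA0 : x ∈ A0 :=
    mem_closure_of_tendsto htend (Filter.Eventually.of_forall fun n =>
      mem_iUnion.mpr ⟨n, hzE n⟩)
  have hA0closed : IsClosed A0 := isClosed_closure
  have hA0V : A0 ⊆ closure V :=
    closure_minimal (iUnion_subset fun n => hEV n) isClosed_closure
  have hA0Wc : A0 ⊆ closure Wᶜ := by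
    apply closure_minimal ?_ isClosed_closure
    apply iUnion_subset
    intro n a ha
    apply subset_closure
    intro haW
    exact eq_empty_iff_forall_notMem.mp (hEW n) a ⟨ha, haW⟩
  -- the desired continuum: component of `x` in `A0`
  set F : Set X := connectedComponentIn A0 x with hFdef
  have hxF : x ∈ F := mem_connectedComponentIn hxA0
  have hFclosed : IsClosed F := isClosed_connectedComponentIn' hA0closed x
  have hFcompact : IsCompact F := hFclosed.isCompact
  have hFprecon : IsPreconnected F := isPreconnected_connectedComponentIn
  have hFA0 : F ⊆ A0 := connectedComponentIn_subset _ _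
  have hFK : (F ∩ K).Nonempty := ⟨x, hxF, hxK⟩
  -- `F ⊆ W`
  have hFW : F ⊆ W :=
    subset_sUnion_of_mem (⟨hFcompact, hFprecon, hFA0.trans hA0V, hFK⟩ : F ∈ 𝒞)
  -- `F` meets `Vᶜ`, hence `Kᶜ`
  have hFVc : (F ∩ Kᶜ).Nonempty := by
    have hnsub : ¬ F ⊆ V := by
      intro hFV
      obtain ⟨P, O, hOopen, hPO, hPclosed, hcompP, hPV⟩ :=
        exists_relClopen_subset hA0closed hVopen hxA0 hFV
      have hxO : x ∈ O := (hPO ▸ hcompP hxF).1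
      obtain ⟨n, hn⟩ := (htend.eventually (hOopen.mem_nhds hxO)).exists
      have hznA0 : z n ∈ A0 := hEA0 n (hzE n)
      have hznP : z n ∈ P := hPO ▸ ⟨hn, hznA0⟩
      have : E n ⊆ P := precon_subset_of_relClopen hOopen hPO hPclosed (hEprecon n)
        (hEA0 n) ⟨z n, hzE n, hznP⟩
      exact hEnV n (this.trans hPV)
    obtain ⟨a, haF, haV⟩ := not_subset.mp hnsub
    exact ⟨a, haF, fun haK => haV (hKV haK)⟩
  -- `F` is nowhere dense
  have hFnwd : IsNowhereDense F := by
    rw [hFclosed.isNowhereDense_iff]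
    rw [eq_empty_iff_forall_notMem]
    intro q hq
    have hqWc : q ∈ closure Wᶜ := hA0Wc (hFA0 (interior_subset hq))
    obtain ⟨r, hr1, hr2⟩ := mem_closure_iff.mp hqWc (interior F) isOpen_interior hq
    exact hr2 (hFW (interior_subset hr1))
  exact ⟨F, hFcompact, ⟨⟨x, hxF⟩, hFprecon⟩, hFnwd, hFK, hFVc⟩
end

section
/- Let X be a hereditarily unicoherent continuum and M_x the meager composant of a point x in X. If K is a subcontinuum of X such that M_x ∩ K is dense in K, then every ample subcontinuum of K intersects M_x. -/
open Set Topology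

/-- `A` is an ample subcontinuum of `K` (relative to the subspace topology of `K`):
every relatively open neighborhood of `A` in `K` contains a subcontinuum of `K` whose
relative interior in `K` contains `A`. -/
def AmpleIn {X : Type} [TopologicalSpace X] (K A : Set X) : Prop :=
  A ⊆ K ∧ ∀ U : Set X, IsOpen U → A ⊆ U →
    ∃ C : Set X, C ⊆ K ∧ IsCompact C ∧ IsPreconnected C ∧ C ⊆ U ∧
      A ⊆ {y : X | ∃ V : Set X, IsOpen V ∧ y ∈ V ∧ V ∩ K ⊆ C}


/-- The intersection of a decreasing sequence of compact connected sets in a T2 space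
is preconnected. -/
lemma isPreconnected_iInter_of_antitone {X : Type} [TopologicalSpace X] [T2Space X]
    (E : ℕ → Set X) (hcomp : ∀ n, IsCompact (E n)) (hconn : ∀ n, IsPreconnected (E n))
    (hmono : ∀ n, E (n + 1) ⊆ E n) : IsPreconnected (⋂ n, E n) := by
  set s := ⋂ n, E n with hs
  have hsub : ∀ n, s ⊆ E n := fun n => iInter_subset E n
  have hcl : ∀ n, IsClosed (E n) := fun n => (hcomp n).isClosed
  have hsc : IsCompact s :=
    (hcomp 0).of_isClosed_subset (isClosed_iInter hcl) (hsub 0)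
  rintro U V hU hV hsUV ⟨p, hpU⟩ ⟨q, hqV⟩
  by_contra hUV
  rw [not_nonempty_iff_eq_empty] at hUV
  -- P and Q are the two pieces of the separation
  have hPQ : Disjoint (s \ V) (s \ U) := by
    rw [Set.disjoint_left]
    rintro z ⟨hzs, hzV⟩ ⟨_, hzU⟩
    rcases hsUV hzs with h | h
    · exact hzU h
    · exact hzV h
  obtain ⟨U', V', hU'o, hV'o, hPU', hQV', hd⟩ :=
    SeparatedNhds.of_isCompact_isCompact (hsc.diff hV) (hsc.diff hU) hPQ
  have hsP : s ⊆ U' ∪ V' := by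
    intro z hz
    by_cases hzV : z ∈ V
    · by_cases hzU : z ∈ U
      · exact absurd (by exact ⟨hz, hzU, hzV⟩ : z ∈ s ∩ (U ∩ V)) (by simp [hUV])
      · exact Or.inr (hQV' ⟨hz, hzU⟩)
    · exact Or.inl (hPU' ⟨hz, hzV⟩)
  -- find n with E n ⊆ U' ∪ V'
  have hex : ∃ n, E n ⊆ U' ∪ V' := by
    by_contra hno
    push_neg at hno
    have hne : ∀ n, (E n \ (U' ∪ V')).Nonempty := by
      intro n
      obtain ⟨z, hz1, hz2⟩ := not_subset.mp (hno n)
      exact ⟨z, hz1, hz2⟩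
    obtain ⟨z, hz⟩ := IsCompact.nonempty_iInter_of_sequence_nonempty_isCompact_isClosed
      (fun n => E n \ (U' ∪ V')) (fun n => diff_subset_diff_left (hmono n)) hne
      ((hcomp 0).diff (hU'o.union hV'o))
      (fun n => (hcl n).sdiff (hU'o.union hV'o))
    simp only [mem_iInter, mem_diff] at hz
    exact (hz 0).2 (hsP (mem_iInter.mpr fun n => (hz n).1))
  obtain ⟨n, hn⟩ := hex
  have hpU' : p ∈ U' := by
    refine hPU' ⟨hpU.1, fun hpV => ?_⟩
    exact absurd (by exact ⟨hpU.1, hpU.2, hpV⟩ : p ∈ s ∩ (U ∩ V)) (by simp [hUV])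
  have hqV' : q ∈ V' := by
    refine hQV' ⟨hqV.1, fun hqU => ?_⟩
    exact absurd (by exact ⟨hqV.1, hqU, hqV.2⟩ : q ∈ s ∩ (U ∩ V)) (by simp [hUV])
  obtain ⟨z, hz⟩ := hconn n U' V' hU'o hV'o hn ⟨p, hsub n hpU.1, hpU'⟩ ⟨q, hsub n hqV.1, hqV'⟩
  exact (Set.disjoint_left.mp hd hz.2.1) hz.2.2

/-- In a hereditarily unicoherent continuum, if `M_x ∩ K` is dense in a subcontinuum `K`,
then every ample subcontinuum of `K` intersects `M_x`. -/
theorem ample_subcontinuum_meets_meagerComposant (X : Type) [MetricSpace X] [CompactSpace X] [ConnectedSpace X] [Nonempty X]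
    (hX : HereditarilyUnicoherent X) (x : X)
    (K : Set X) (hKc : IsCompact K) (hKconn : IsConnected K)
    (hdense : K ⊆ closure (MeagerComposant X x ∩ K))
    (A : Set X) (hAc : IsCompact A) (hAconn : IsConnected A) (hAK : A ⊆ K)
    (hample : AmpleIn K A) :
    (A ∩ MeagerComposant X x).Nonempty := by
  obtain ⟨a, ha⟩ := hAconn.nonempty
  by_cases hintA : (interior A).Nonempty
  · -- If `A` has interior, a meager point lies directly inside `A` by density.
    obtain ⟨w, hw⟩ := hintA
    obtain ⟨z, hz1, hz2⟩ := mem_closure_iff.mp (hdense (hAK (interior_subset hw)))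
      (interior A) isOpen_interior hw
    exact ⟨z, interior_subset hz1, hz2.1⟩
  rw [not_nonempty_iff_eq_empty] at hintA
  -- For every `n`, find a continuum `C n` close to `A` with `A ⊆ C n`, and a nowhere
  -- dense continuum `L n` through `x` meeting `C n`.
  have hdata : ∀ n : ℕ, ∃ C L : Set X,
      IsCompact C ∧ IsPreconnected C ∧ C ⊆ Metric.thickening (1 / (n + 1 : ℝ)) A ∧
      A ⊆ C ∧ IsCompact L ∧ IsConnected L ∧ IsNowhereDense L ∧ x ∈ L ∧
      (L ∩ C).Nonempty := by
    intro n
    have hpos : (0 : ℝ) < 1 / (n + 1 : ℝ) := by positivity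
    obtain ⟨C, hCK, hCc, hCpc, hCU, hCint⟩ :=
      hample.2 _ Metric.isOpen_thickening (Metric.self_subset_thickening hpos A)
    have hAC : A ⊆ C := fun y hy => by
      obtain ⟨V, hVo, hyV, hVK⟩ := hCint hy
      exact hVK ⟨hyV, hAK hy⟩
    obtain ⟨V, hVo, haV, hVKC⟩ := hCint ha
    obtain ⟨m, hm1, hm2⟩ := mem_closure_iff.mp (hdense (hAK ha)) V hVo haV
    have hmC : m ∈ C := hVKC ⟨hm1, hm2.2⟩
    obtain ⟨L, ⟨hLc, hLconn, hLnd, hxL⟩, hmL⟩ := hm2.1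
    exact ⟨C, L, hCc, hCpc, hCU, hAC, hLc, hLconn, hLnd, hxL, ⟨m, hmL, hmC⟩⟩
  choose C L hCc hCpc hCU hAC hLc hLconn hLnd hxL hLC using hdata
  -- The continua `T n = L n ∪ C n` contain `x` and `A`.
  set T : ℕ → Set X := fun n => L n ∪ C n with hT
  have hTc : ∀ n, IsCompact (T n) := fun n => (hLc n).union (hCc n)
  have hTconn : ∀ n, IsConnected (T n) := fun n =>
    (hLconn n).union (hLC n) ⟨⟨(hLC n).choose, (hLC n).choose_spec.2⟩, hCpc n⟩
  have hxT : ∀ n, x ∈ T n := fun n => Or.inl (hxL n)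
  have hAT : ∀ n, A ⊆ T n := fun n => (hAC n).trans subset_union_right
  -- Nested intersections of the `T n`, continua by hereditary unicoherence.
  set E : ℕ → Set X := fun n => Nat.rec (T 0) (fun n En => En ∩ T (n + 1)) n with hE
  have hE0 : E 0 = T 0 := rfl
  have hEsucc : ∀ n, E (n + 1) = E n ∩ T (n + 1) := fun n => rfl
  have hxE : ∀ n, x ∈ E n := by
    intro n; induction n with
    | zero => exact hxT 0
    | succ n ih => exact ⟨ih, hxT (n + 1)⟩
  have hAE : ∀ n, A ⊆ E n := by
    intro n; induction n with
    | zero => exact hAT 0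
    | succ n ih => exact subset_inter ih (hAT (n + 1))
  have hEck : ∀ n, IsCompact (E n) ∧ IsConnected (E n) := by
    intro n; induction n with
    | zero => exact ⟨hTc 0, hTconn 0⟩
    | succ n ih =>
      refine ⟨ih.1.inter_right (hTc (n + 1)).isClosed, ⟨x, hxE (n + 1)⟩, ?_⟩
      exact hX (E n) (T (n + 1)) ih.1 ih.2 (hTc (n + 1)) (hTconn (n + 1))
  have hEmono : ∀ n, E (n + 1) ⊆ E n := fun n => inter_subset_left
  have hET : ∀ n, E n ⊆ T n := by
    intro n; cases n with
    | zero => exact subset_rfl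
    | succ n => exact inter_subset_right
  -- The total intersection is a continuum containing `x` and `A`.
  set Etot : Set X := ⋂ n, E n with hEtot
  have hEtotc : IsCompact Etot :=
    (hEck 0).1.of_isClosed_subset (isClosed_iInter fun n => (hEck n).1.isClosed)
      (iInter_subset E 0)
  have hEtotconn : IsPreconnected Etot :=
    isPreconnected_iInter_of_antitone E (fun n => (hEck n).1)
      (fun n => (hEck n).2.isPreconnected) hEmono
  have hxEtot : x ∈ Etot := mem_iInter.mpr hxE
  have hAEtot : A ⊆ Etot := subset_iInter hAE
  -- `Etot` is nowhere dense.
  have hEtotnd : IsNowhereDense Etot := by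
    rw [IsNowhereDense, hEtotc.isClosed.closure_eq]
    by_contra hne
    rw [← Ne, ← nonempty_iff_ne_empty] at hne
    have hwa : ∃ w ∈ interior Etot, w ∉ A := by
      by_contra hcon
      push_neg at hcon
      have : interior Etot ⊆ interior A := interior_maximal hcon isOpen_interior
      rw [hintA] at this
      exact (hne.mono this).ne_empty rfl
    obtain ⟨w, hwE, hwA⟩ := hwa
    have hApos : 0 < Metric.infDist w A :=
      (hAc.isClosed.notMem_iff_infDist_pos ⟨a, ha⟩).mp hwA
    obtain ⟨n, hn⟩ := exists_nat_one_div_lt hApos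
    set W : Set X := interior Etot ∩ {y | 1 / (n + 1 : ℝ) < Metric.infDist y A} with hW
    have hWo : IsOpen W := isOpen_interior.inter
      (isOpen_lt continuous_const (Metric.continuous_infDist_pt A))
    have hwW : w ∈ W := ⟨hwE, hn⟩
    have hWL : W ⊆ L n := by
      rintro y ⟨hy1, hy2⟩
      have hyT : y ∈ T n := hET n (mem_iInter.mp (interior_subset hy1) n)
      rcases hyT with h | h
      · exact h
      · exfalso
        obtain ⟨z, hzA, hz⟩ := Metric.mem_thickening_iff.mp (hCU n h)
        exact absurd ((Metric.infDist_le_dist_of_mem hzA).trans_lt hz) (not_lt.mpr hy2.le)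
    have : W ⊆ interior (closure (L n)) :=
      interior_maximal (hWL.trans subset_closure) hWo
    rw [hLnd n] at this
    exact this hwW
  have hmem : Etot ∈ {L : Set X | IsCompact L ∧ IsConnected L ∧ IsNowhereDense L ∧ x ∈ L} :=
    ⟨hEtotc, ⟨⟨x, hxEtot⟩, hEtotconn⟩, hEtotnd, hxEtot⟩
  exact ⟨a, ha, mem_sUnion.mpr ⟨Etot, hmem, hAEtot ha⟩⟩
end

section
/- Let X be a hereditarily unicoherent continuum and x ∈ X. If the meager composant M_x contains a dense open subset of X, then M_x = X. -/
open Set Topology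

section MainProof
variable {X : Type} [MetricSpace X] [CompactSpace X]
set_option linter.unusedSectionVars false



variable {X : Type} [MetricSpace X] [CompactSpace X]

lemma nwd_mono {s t : Set X} (hst : s ⊆ t) (h : IsNowhereDense t) : IsNowhereDense s :=
  eq_empty_of_subset_empty (h ▸ interior_mono (closure_mono hst))

lemma nwd_union_closed {s t : Set X} (hs : IsClosed s) (ht : IsClosed t)
    (hns : IsNowhereDense s) (hnt : IsNowhereDense t) : IsNowhereDense (s ∪ t) := by
  rw [(hs.union ht).isNowhereDense_iff]
  rw [hs.isNowhereDense_iff] at hns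
  rw [ht.isNowhereDense_iff] at hnt
  have hUt : interior (s ∪ t) \ s ⊆ t := fun w hw => (interior_subset hw.1).resolve_left hw.2
  have h1 : interior (s ∪ t) \ s ⊆ interior t :=
    (isOpen_interior.sdiff hs).subset_interior_iff.mpr hUt
  rw [hnt, subset_empty_iff, diff_eq_empty] at h1
  have h2 : interior (s ∪ t) ⊆ interior s := isOpen_interior.subset_interior_iff.mpr h1
  rw [hns, subset_empty_iff] at h2
  exact h2

/-- The family of subcontinua containing `a` and `b`. -/
def SubcontFam (a b : X) : Set (Set X) :=
  {K | IsCompact K ∧ IsPreconnected K ∧ a ∈ K ∧ b ∈ K}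

/-- The intersection of all subcontinua containing `a` and `b`. -/
def seg (a b : X) : Set X := ⋂₀ SubcontFam a b

lemma univ_mem_subcontFam [ConnectedSpace X] (a b : X) : univ ∈ SubcontFam a b :=
  ⟨isCompact_univ, isPreconnected_univ, mem_univ a, mem_univ b⟩

lemma seg_subset {a b : X} {K : Set X} (h : K ∈ SubcontFam a b) : seg a b ⊆ K :=
  sInter_subset_of_mem h

lemma left_mem_seg (a b : X) : a ∈ seg a b :=
  mem_sInter.mpr fun _ hK => hK.2.2.1

lemma right_mem_seg (a b : X) : b ∈ seg a b :=
  mem_sInter.mpr fun _ hK => hK.2.2.2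

lemma isClosed_seg (a b : X) : IsClosed (seg a b) :=
  isClosed_sInter fun _ hK => hK.1.isClosed

lemma isCompact_seg (a b : X) : IsCompact (seg a b) :=
  (isClosed_seg a b).isCompact

lemma isPreconnected_seg [ConnectedSpace X] (hX : HereditarilyUnicoherent X) (a b : X) :
    IsPreconnected (seg a b) := by
  intro U V hU hV hcov hUne hVne
  by_contra hcon
  rw [not_nonempty_iff_eq_empty] at hcon
  set S := seg a b with hS
  have hconw : ∀ w, w ∈ S → w ∈ U → w ∈ V → False := fun w h1 h2 h3 =>
    (eq_empty_iff_forall_notMem.mp hcon w) ⟨h1, h2, h3⟩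
  have hScl : IsClosed S := isClosed_seg a b
  have hA : IsClosed (S \ V) := hScl.sdiff hV
  have hB : IsClosed (S \ U) := hScl.sdiff hU
  have hdisj : Disjoint (S \ V) (S \ U) := by
    rw [Set.disjoint_left]
    rintro w ⟨hw, hwV⟩ ⟨_, hwU⟩
    rcases hcov hw with h | h
    exacts [hwU h, hwV h]
  obtain ⟨U', V', hU', hV', hAU', hBV', hUV'⟩ := normal_separation hA hB hdisj
  haveI : Nonempty (SubcontFam a b) := ⟨⟨univ, univ_mem_subcontFam a b⟩⟩
  have hdir : Directed (· ⊇ ·) (fun K : SubcontFam a b => (K : Set X) \ (U' ∪ V')) := by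
    rintro ⟨K₁, hK₁⟩ ⟨K₂, hK₂⟩
    have hmem : K₁ ∩ K₂ ∈ SubcontFam a b :=
      ⟨hK₁.1.inter_right hK₂.1.isClosed,
        hX K₁ K₂ hK₁.1 ⟨⟨a, hK₁.2.2.1⟩, hK₁.2.1⟩ hK₂.1 ⟨⟨a, hK₂.2.2.1⟩, hK₂.2.1⟩,
        ⟨hK₁.2.2.1, hK₂.2.2.1⟩, ⟨hK₁.2.2.2, hK₂.2.2.2⟩⟩
    exact ⟨⟨K₁ ∩ K₂, hmem⟩, diff_subset_diff_left inter_subset_left,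
      diff_subset_diff_left inter_subset_right⟩
  have hSsub : S ⊆ U' ∪ V' := by
    intro s hsS
    by_cases hsV : s ∈ V
    · by_cases hsU : s ∈ U
      · exact absurd (hconw s hsS hsU hsV) not_false
      · exact Or.inr (hBV' ⟨hsS, hsU⟩)
    · exact Or.inl (hAU' ⟨hsS, hsV⟩)
  have hempty : (univ : Set X) ∩ ⋂ K : SubcontFam a b, ((K : Set X) \ (U' ∪ V')) = ∅ := by
    rw [univ_inter, eq_empty_iff_forall_notMem]
    intro w hw
    rw [mem_iInter] at hw
    have hwS : w ∈ S := mem_sInter.mpr fun K hK => (hw ⟨K, hK⟩).1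
    exact (hw ⟨univ, univ_mem_subcontFam a b⟩).2 (hSsub hwS)
  obtain ⟨⟨K, hK⟩, hKe⟩ := isCompact_univ.elim_directed_family_closed
    (fun K : SubcontFam a b => (K : Set X) \ (U' ∪ V'))
    (fun K => K.2.1.isClosed.sdiff (hU'.union hV')) hempty hdir
  rw [univ_inter, diff_eq_empty] at hKe
  obtain ⟨u, huS, huU⟩ := hUne
  obtain ⟨v, hvS, hvV⟩ := hVne
  have huA : u ∈ S \ V := ⟨huS, fun h => hconw u huS huU h⟩
  have hvB : v ∈ S \ U := ⟨hvS, fun h => hconw v hvS h hvV⟩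
  have hSK : S ⊆ K := sInter_subset_of_mem hK
  have hne : (K ∩ (U' ∩ V')).Nonempty :=
    hK.2.1 U' V' hU' hV' hKe ⟨u, hSK huA.1, hAU' huA⟩ ⟨v, hSK hvB.1, hBV' hvB⟩
  rw [hUV'.inter_eq, inter_empty] at hne
  exact hne.ne_empty rfl



/-- Boundary bumping: in a continuum `T`, the connected component of `z` in a proper
closed subset `A` meets the closure of `T \ A`. -/
lemma bump {T A : Set X} (hT : IsPreconnected T) (hA : IsClosed A)
    (hAT : A ⊆ T) {z : X} (hz : z ∈ A) (hne : (T \ A).Nonempty) :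
    (connectedComponentIn A z ∩ closure (T \ A)).Nonempty := by
  by_contra h
  rw [not_nonempty_iff_eq_empty] at h
  have hAcp : IsCompact A := hA.isCompact
  haveI : CompactSpace A := isCompact_iff_compactSpace.mp hAcp
  set z' : A := ⟨z, hz⟩ with hz'
  have hQ : connectedComponentIn A z = ((↑) : A → X) '' connectedComponent z' :=
    connectedComponentIn_eq_image hz
  set F' : Set A := ((↑) : A → X) ⁻¹' closure (T \ A) with hF'
  have hF'cl : IsClosed F' := isClosed_closure.preimage continuous_subtype_val
  have hccF : connectedComponent z' ∩ F' = ∅ := by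
    rw [eq_empty_iff_forall_notMem]
    rintro a ⟨ha1, ha2⟩
    have haQ : (a : X) ∈ connectedComponentIn A z := by
      rw [hQ]; exact mem_image_of_mem _ ha1
    exact (eq_empty_iff_forall_notMem.mp h) (a : X) ⟨haQ, ha2⟩
  have hcc := connectedComponent_eq_iInter_isClopen z'
  haveI : Nonempty { s : Set A // IsClopen s ∧ z' ∈ s } := ⟨⟨univ, isClopen_univ, mem_univ z'⟩⟩
  have hdir : Directed (· ⊇ ·) (fun s : { s : Set A // IsClopen s ∧ z' ∈ s } => (s : Set A)) := by
    rintro ⟨s₁, hs₁⟩ ⟨s₂, hs₂⟩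
    exact ⟨⟨s₁ ∩ s₂, hs₁.1.inter hs₂.1, ⟨hs₁.2, hs₂.2⟩⟩, inter_subset_left, inter_subset_right⟩
  have hFe : F' ∩ ⋂ s : { s : Set A // IsClopen s ∧ z' ∈ s }, (s : Set A) = ∅ := by
    rw [← hcc, inter_comm]; exact hccF
  obtain ⟨⟨E, hEclopen, hzE⟩, hEe⟩ := hF'cl.isCompact.elim_directed_family_closed _
    (fun s => s.2.1.1) hFe hdir
  set E' : Set X := ((↑) : A → X) '' E with hE'
  have hE'A : E' ⊆ A := by rintro _ ⟨a, _, rfl⟩; exact a.2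
  have hE'cp : IsCompact E' := (hEclopen.1.isCompact).image continuous_subtype_val
  have hzE' : z ∈ E' := ⟨z', hzE, rfl⟩
  have hE'F : ∀ w ∈ E', w ∉ closure (T \ A) := by
    rintro _ ⟨a, haE, rfl⟩ hwF
    exact (eq_empty_iff_forall_notMem.mp hEe) a ⟨hwF, haE⟩
  obtain ⟨W, hW, hWE⟩ := isOpen_induced_iff.mp hEclopen.2
  have hE'eq : E' = A ∩ W := by rw [hE', ← hWE, Subtype.image_preimage_coe]
  set U₀ : Set X := W ∩ (closure (T \ A))ᶜ with hU₀
  have hU₀o : IsOpen U₀ := hW.inter isClosed_closure.isOpen_compl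
  have hE'TU : E' = T ∩ U₀ := by
    apply Subset.antisymm
    · intro e he
      have heAW : e ∈ A ∩ W := hE'eq ▸ he
      exact ⟨hAT heAW.1, heAW.2, hE'F e he⟩
    · intro t ht
      obtain ⟨htT, htW, htF⟩ := ht
      have htA : t ∈ A := by
        by_contra hc
        exact htF (subset_closure ⟨htT, hc⟩)
      rw [hE'eq]; exact ⟨htA, htW⟩
  have hE'cl : IsClosed E' := hE'cp.isClosed
  have hcover : T ⊆ U₀ ∪ E'ᶜ := by
    intro t ht
    by_cases hte : t ∈ E'
    · exact Or.inl (hE'TU ▸ hte).2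
    · exact Or.inr hte
  obtain ⟨p, hpTA⟩ := hne
  have hnonU : (T ∩ U₀).Nonempty := ⟨z, hAT hz, (hE'TU ▸ hzE').2⟩
  have hnonV : (T ∩ E'ᶜ).Nonempty := ⟨p, hpTA.1, fun hc => hpTA.2 (hE'A hc)⟩
  obtain ⟨w0, hw0T, hw0U, hw0E⟩ := hT U₀ E'ᶜ hU₀o hE'cl.isOpen_compl hcover hnonU hnonV
  exact hw0E (hE'TU ▸ (⟨hw0T, hw0U⟩ : w0 ∈ T ∩ U₀))



/-- If a meager composant of a hereditarily unicoherent continuum contains a dense open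
subset of `X`, then it is all of `X`. -/
theorem meagerComposant_eq_univ_of_dense_open (X : Type) [MetricSpace X] [CompactSpace X] [ConnectedSpace X] [Nonempty X]
    (hX : HereditarilyUnicoherent X) (x : X) (O : Set X)
    (hO : IsOpen O) (hOd : Dense O) (hOM : O ⊆ MeagerComposant X x) :
    MeagerComposant X x = Set.univ := by
  by_contra hneq
  obtain ⟨z, hz⟩ : ∃ z, z ∉ MeagerComposant X x := by
    by_contra hc
    push_neg at hc
    exact hneq (eq_univ_of_forall hc)
  -- joining a nowhere dense continuum through a point of the meager composant gives z ∈ M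
  have key : ∀ q : X, q ∈ MeagerComposant X x → ∀ L : Set X, IsCompact L → IsPreconnected L →
      IsNowhereDense L → z ∈ L → q ∈ L → False := by
    intro q hq L hLc hLp hLn hzL hqL
    obtain ⟨L', ⟨hL'c, hL'conn, hL'n, hxL'⟩, hqL'⟩ := hq
    refine hz ⟨L ∪ L', ⟨hLc.union hL'c, ?_, nwd_union_closed hLc.isClosed hL'c.isClosed hLn hL'n,
      Or.inr hxL'⟩, Or.inl hzL⟩
    exact ⟨⟨q, Or.inl hqL⟩, IsPreconnected.union q hqL hqL' hLp hL'conn.isPreconnected⟩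
  -- segments between points of M are nowhere dense
  have hsegnwd : ∀ a ∈ MeagerComposant X x, ∀ b ∈ MeagerComposant X x,
      IsNowhereDense (seg a b) := by
    intro a ha b hb
    obtain ⟨La, ⟨hac, haconn, han, hxa⟩, haa⟩ := ha
    obtain ⟨Lb, ⟨hbc, hbconn, hbn, hxb⟩, hbb⟩ := hb
    have hmem : La ∪ Lb ∈ SubcontFam a b :=
      ⟨hac.union hbc,
        IsPreconnected.union x hxa hxb haconn.isPreconnected hbconn.isPreconnected,
        Or.inl haa, Or.inr hbb⟩
    exact nwd_mono (seg_subset hmem) (nwd_union_closed hac.isClosed hbc.isClosed han hbn)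
  have hzO : z ∉ O := fun h => hz (hOM h)
  obtain ⟨y₀, hy₀⟩ := hOd.nonempty
  set K₀ : Set X := seg z y₀ with hK₀
  set V₀ : Set X := interior K₀ with hV₀
  -- K₀ is not nowhere dense
  have hV₀ne : V₀.Nonempty := by
    rw [nonempty_iff_ne_empty]
    intro hemp
    have hnwd : IsNowhereDense K₀ := (isClosed_seg z y₀).isNowhereDense_iff.mpr hemp
    exact key y₀ (hOM hy₀) K₀ (isCompact_seg z y₀) (isPreconnected_seg hX z y₀) hnwd
      (left_mem_seg z y₀) (right_mem_seg z y₀)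
  -- step 3 : for every w ∈ O, V₀ ⊆ seg z w
  have hstep3 : ∀ w ∈ O, V₀ ⊆ seg z w := by
    intro w hw
    have hN : IsNowhereDense (seg y₀ w) := hsegnwd y₀ (hOM hy₀) w (hOM hw)
    have hmem : (seg z w ∪ seg y₀ w) ∈ SubcontFam z y₀ :=
      ⟨(isCompact_seg z w).union (isCompact_seg y₀ w),
        IsPreconnected.union w (right_mem_seg z w) (right_mem_seg y₀ w)
          (isPreconnected_seg hX z w) (isPreconnected_seg hX y₀ w),
        Or.inl (left_mem_seg z w), Or.inr (left_mem_seg y₀ w)⟩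
    have hsub : K₀ ⊆ seg z w ∪ seg y₀ w := seg_subset hmem
    have h1 : V₀ \ seg y₀ w ⊆ seg z w :=
      fun v hv => (hsub (interior_subset hv.1)).resolve_right hv.2
    have h2 : V₀ ⊆ closure (V₀ \ seg y₀ w) := by
      intro v hv
      rw [mem_closure_iff]
      intro G hG hvG
      by_contra hcon
      rw [not_nonempty_iff_eq_empty] at hcon
      have hsubN : G ∩ V₀ ⊆ seg y₀ w := by
        intro p hp
        by_contra hps
        exact (eq_empty_iff_forall_notMem.mp hcon) p ⟨hp.1, hp.2, hps⟩
      have hsubI : G ∩ V₀ ⊆ interior (seg y₀ w) :=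
        (hG.inter isOpen_interior).subset_interior_iff.mpr hsubN
      rw [(isClosed_seg y₀ w).isNowhereDense_iff.mp hN] at hsubI
      exact hsubI ⟨hvG, hv⟩
    exact fun v hv => (isClosed_seg z w).closure_subset ((closure_mono h1) (h2 hv))
  -- pick w⋆ ∈ O ∩ V₀
  obtain ⟨w₁, hw₁V, hw₁O⟩ := hOd.inter_open_nonempty V₀ isOpen_interior hV₀ne
  have hzw₁ : z ≠ w₁ := fun h => hzO (h ▸ hw₁O)
  have hdpos : 0 < dist z w₁ := dist_pos.mpr hzw₁
  -- radius
  have hOV₀open : IsOpen (O ∩ V₀) := hO.inter isOpen_interior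
  obtain ⟨ε, hεpos, hεball⟩ := Metric.isOpen_iff.mp hOV₀open w₁ ⟨hw₁O, hw₁V⟩
  set r : ℝ := min (ε / 2) (dist z w₁ / 2) with hr
  have hrpos : 0 < r := lt_min (by linarith) (by linarith)
  have hrlt : r < dist z w₁ := lt_of_le_of_lt (min_le_right _ _) (by linarith)
  have hrball : Metric.closedBall w₁ r ⊆ O ∩ V₀ := by
    refine subset_trans (Metric.closedBall_subset_ball ?_) hεball
    exact lt_of_le_of_lt (min_le_left _ _) (by linarith)
  set T : Set X := seg z w₁ with hT
  have hV₀T : V₀ ⊆ T := hstep3 w₁ hw₁O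
  set A : Set X := T \ Metric.ball w₁ r with hA
  have hAcl : IsClosed A := (isClosed_seg z w₁).sdiff Metric.isOpen_ball
  have hzA : z ∈ A := ⟨left_mem_seg z w₁, fun hc => absurd (Metric.mem_ball.mp hc) (not_lt.mpr hrlt.le)⟩
  have hTA : (T \ A).Nonempty :=
    ⟨w₁, right_mem_seg z w₁, fun hc => hc.2 (Metric.mem_ball_self hrpos)⟩
  have hTball : T \ A ⊆ Metric.ball w₁ r := by
    intro t ht
    by_contra hc
    exact ht.2 ⟨ht.1, hc⟩
  set Q : Set X := connectedComponentIn A z with hQ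
  have hzQ : z ∈ Q := mem_connectedComponentIn hzA
  have hQA : Q ⊆ A := connectedComponentIn_subset A z
  have hQp : IsPreconnected Q := isPreconnected_connectedComponentIn
  have hQcp : IsCompact Q := by
    haveI : CompactSpace A := isCompact_iff_compactSpace.mp hAcl.isCompact
    rw [hQ, connectedComponentIn_eq_image hzA]
    exact (isClosed_connectedComponent.isCompact).image continuous_subtype_val
  obtain ⟨q, hqQ, hqcl⟩ := bump (isPreconnected_seg hX z w₁) hAcl diff_subset hzA hTA
  have hqOV : q ∈ O ∩ V₀ :=
    hrball (Metric.closure_ball_subset_closedBall ((closure_mono hTball) hqcl))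
  rcases eq_empty_or_nonempty (interior Q) with hQi | hQi
  · -- Q nowhere dense : contradiction via key
    exact key q (hOM hqOV.1) Q hQcp hQp (hQcp.isClosed.isNowhereDense_iff.mpr hQi) hzQ hqQ
  · -- Q has interior : w₁ ∈ Q ⊆ A, absurd
    obtain ⟨w, hwI, hwO⟩ := hOd.inter_open_nonempty (interior Q) isOpen_interior hQi
    have hsegQ : seg z w ⊆ Q :=
      seg_subset ⟨hQcp, hQp, hzQ, interior_subset hwI⟩
    have hw₁Q : w₁ ∈ Q := hsegQ (hstep3 w hwO hw₁V)
    exact (hQA hw₁Q).2 (Metric.mem_ball_self hrpos)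

end MainProof
end

section
/- Let X be a continuum irreducible between points a and b, and let A = {x ∈ X : X is irreducible between x and b}. If the closure of A has nonempty interior in X, then the closure of A is an indecomposable continuum. -/
open Set Topology

section Auxiliary

variable {X : Type} [MetricSpace X] [CompactSpace X] [ConnectedSpace X]

/-- The connected component of a point in a closed subset of a compact space is compact. -/
lemma IrrAux.isCompact_connectedComponentIn {F : Set X} (hF : IsClosed F) (x : X) :
    IsCompact (connectedComponentIn F x) := by
  by_cases hx : x ∈ F
  · rw [connectedComponentIn_eq_image hx]
    haveI : CompactSpace F := isCompact_iff_compactSpace.mp hF.isCompact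
    exact (isClosed_connectedComponent.isCompact).image continuous_subtype_val
  · rw [connectedComponentIn_eq_empty hx]
    exact isCompact_empty

/-- Boundary bumping: in a connected compact metric space, the connected component of a
point of a proper closed set `F` meets the frontier of `F`. -/
lemma IrrAux.bumping {F : Set X} (hF : IsClosed F) (hFne : F ≠ univ) {x : X} (hx : x ∈ F) :
    (connectedComponentIn F x ∩ frontier F).Nonempty := by
  by_contra hcon
  rw [not_nonempty_iff_eq_empty] at hcon
  haveI : CompactSpace F := isCompact_iff_compactSpace.mp hF.isCompact
  set y : F := ⟨x, hx⟩ with hy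
  set Φ : Set F := ((↑) : F → X) ⁻¹' (frontier F) with hΦ
  have hΦclosed : IsClosed Φ := isClosed_frontier.preimage continuous_subtype_val
  -- first, find a clopen set Z ∋ y in the subtype F with Z ∩ Φ = ∅
  have hexists : ∃ Z : Set F, IsClopen Z ∧ y ∈ Z ∧ Z ∩ Φ = ∅ := by
    by_contra hno
    have hne : ∀ i : {s : Set F // IsClopen s ∧ y ∈ s}, ((i : Set F) ∩ Φ).Nonempty := by
      intro i
      rcases eq_empty_or_nonempty ((i : Set F) ∩ Φ) with h | h
      · exact absurd ⟨i.1, i.2.1, i.2.2, h⟩ hno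
      · exact h
    have hdir : Directed (· ⊇ ·)
        (fun i : {s : Set F // IsClopen s ∧ y ∈ s} => (i : Set F) ∩ Φ) := by
      rintro ⟨s, hs, hys⟩ ⟨t, ht, hyt⟩
      exact ⟨⟨s ∩ t, hs.inter ht, ⟨hys, hyt⟩⟩,
        inter_subset_inter_left Φ inter_subset_left,
        inter_subset_inter_left Φ inter_subset_right⟩
    haveI : Nonempty {s : Set F // IsClopen s ∧ y ∈ s} :=
      ⟨⟨univ, isClopen_univ, mem_univ y⟩⟩
    have hnonempty := IsCompact.nonempty_iInter_of_directed_nonempty_isCompact_isClosed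
      _ hdir hne
      (fun i => (i.2.1.1.inter hΦclosed).isCompact)
      (fun i => i.2.1.1.inter hΦclosed)
    obtain ⟨z, hz⟩ := hnonempty
    simp only [mem_iInter] at hz
    have hzcc : z ∈ connectedComponent y := by
      rw [connectedComponent_eq_iInter_isClopen y]
      exact mem_iInter.mpr fun i => (hz i).1
    have hzΦ : (z : X) ∈ frontier F := (hz ⟨univ, isClopen_univ, mem_univ y⟩).2
    have : (z : X) ∈ connectedComponentIn F x ∩ frontier F := by
      refine ⟨?_, hzΦ⟩
      rw [connectedComponentIn_eq_image hx]
      exact ⟨z, hzcc, rfl⟩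
    rw [hcon] at this
    exact this
  obtain ⟨Z, hZclopen, hyZ, hZΦ⟩ := hexists
  set D : Set X := ((↑) : F → X) '' Z with hD
  have hDcompact : IsCompact D := (hZclopen.1.isCompact).image continuous_subtype_val
  have hDclosed : IsClosed D := hDcompact.isClosed
  have hDF : D ⊆ F := by
    rintro _ ⟨z, hzZ, rfl⟩
    exact z.2
  have hDfr : ∀ p ∈ D, p ∉ frontier F := by
    rintro _ ⟨z, hzZ, rfl⟩ hfr
    have : z ∈ Z ∩ Φ := ⟨hzZ, hfr⟩
    rw [hZΦ] at this
    exact this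
  have hDint : D ⊆ interior F := by
    intro p hp
    by_contra hpint
    exact hDfr p hp (by rw [hF.frontier_eq]; exact ⟨hDF hp, hpint⟩)
  obtain ⟨O, hOopen, hOZ⟩ : ∃ O : Set X, IsOpen O ∧ ((↑) : F → X) ⁻¹' O = Z :=
    isOpen_induced_iff.mp hZclopen.2
  have hDO : D = F ∩ O := by rw [hD, ← hOZ, Subtype.image_preimage_coe]
  have hDopen : IsOpen D := by
    have : D = interior F ∩ O := by
      apply Subset.antisymm
      · intro p hp
        exact ⟨hDint hp, (hDO ▸ hp).2⟩
      · intro p hp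
        rw [hDO]
        exact ⟨interior_subset hp.1, hp.2⟩
    rw [this]
    exact isOpen_interior.inter hOopen
  have hxD : x ∈ D := ⟨y, hyZ, rfl⟩
  have hDuniv : D = univ := IsClopen.eq_univ ⟨hDclosed, hDopen⟩ ⟨x, hxD⟩
  exact hFne (univ_subset_iff.mp (hDuniv ▸ hDF))

/-- If `K` is a closed preconnected set containing `p` but not `q`, and the space is
irreducible between `p` and `q`, then the complement of `K` is preconnected. -/
lemma IrrAux.compl_preconnected {K : Set X} (hKcl : IsClosed K) (hKpc : IsPreconnected K)
    {p q : X} (hp : p ∈ K) (hq : q ∉ K)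
    (hpq : ∀ C : Set X, IsCompact C → IsConnected C → p ∈ C → q ∈ C → C = univ) :
    IsPreconnected Kᶜ := by
  intro u v hu hv hcov hne_u hne_v
  by_contra h0
  rw [not_nonempty_iff_eq_empty] at h0
  have key : ∀ u v : Set X, IsOpen u → IsOpen v → Kᶜ ⊆ u ∪ v → Kᶜ ∩ (u ∩ v) = ∅ →
      q ∈ u → ∀ β, β ∈ Kᶜ ∩ v → False := by
    clear hcov h0 hne_u hne_v hu hv
    intro u v hu hv hcov h0 hqu β hβ
    set V : Set X := Kᶜ ∩ v with hV
    have hVopen : IsOpen V := hKcl.isOpen_compl.inter hv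
    set F : Set X := Vᶜ with hF
    have hFcl : IsClosed F := hVopen.isClosed_compl
    have hqF : q ∈ F := by
      intro hqV
      have : q ∈ Kᶜ ∩ (u ∩ v) := ⟨hqV.1, hqu, hqV.2⟩
      rw [h0] at this
      exact this
    have hFne : F ≠ univ := by
      intro h
      have : β ∈ F := h ▸ mem_univ β
      exact this hβ
    obtain ⟨w, hwQ, hwfr⟩ := IrrAux.bumping hFcl hFne hqF
    rw [show frontier F = frontier V from frontier_compl V, hVopen.frontier_eq] at hwfr
    obtain ⟨hwclV, hwV⟩ := hwfr
    have hwK : w ∈ K := by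
      by_contra hwK'
      rcases hcov hwK' with hwu | hwv
      · obtain ⟨t, htu, htV⟩ := _root_.mem_closure_iff.mp hwclV u hu hwu
        have : t ∈ Kᶜ ∩ (u ∩ v) := ⟨htV.1, htu, htV.2⟩
        rw [h0] at this
        exact this
      · exact hwV ⟨hwK', hwv⟩
    have hQpc : IsPreconnected (connectedComponentIn F q) :=
      isPreconnected_connectedComponentIn
    have hQc : IsCompact (connectedComponentIn F q) :=
      IrrAux.isCompact_connectedComponentIn hFcl q
    have hqQ : q ∈ connectedComponentIn F q := mem_connectedComponentIn hqF
    have hM := hpq (connectedComponentIn F q ∪ K) (hQc.union hKcl.isCompact)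
      ⟨⟨q, Or.inl hqQ⟩, IsPreconnected.union w hwQ hwK hQpc hKpc⟩
      (Or.inr hp) (Or.inl hqQ)
    have hβM : β ∈ connectedComponentIn F q ∪ K := hM ▸ mem_univ β
    rcases hβM with h | h
    · exact (connectedComponentIn_subset F q h) hβ
    · exact hβ.1 h
  rcases hcov hq with hqu | hqv
  · obtain ⟨β, hβ⟩ := hne_v
    exact key u v hu hv hcov h0 hqu β hβ
  · obtain ⟨β, hβ⟩ := hne_u
    have hcov' : Kᶜ ⊆ v ∪ u := fun t ht => (hcov ht).symm
    have h0' : Kᶜ ∩ (v ∩ u) = ∅ := by rw [inter_comm v u]; exact h0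
    exact key v u hv hu hcov' h0' hqv β hβ

/-- Key lemma: every point outside the closure of the set of irreducibility points lies in
the interior of a proper subcontinuum containing `b`. -/
lemma IrrAux.exists_big (a b : X)
    (hirr : ∀ K : Set X, IsCompact K → IsConnected K → a ∈ K → b ∈ K → K = Set.univ)
    (A : Set X)
    (hA : A = {x : X | ∀ K : Set X, IsCompact K → IsConnected K → x ∈ K → b ∈ K →
      K = Set.univ})
    (hint : (interior (closure A)).Nonempty)
    {z : X} (hz : z ∉ closure A) :
    ∃ R : Set X, IsCompact R ∧ IsPreconnected R ∧ b ∈ R ∧ R ≠ univ ∧ z ∈ interior R := by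
  have haA : a ∈ A := by
    rw [hA]
    exact fun K hKc hKconn haK hbK => hirr K hKc hKconn haK hbK
  obtain ⟨ε, hε, hball⟩ := Metric.isOpen_iff.mp isClosed_closure.isOpen_compl z hz
  set B := Metric.ball z (ε / 2) with hB
  have hBsub : closure B ⊆ (closure A)ᶜ := by
    refine subset_trans Metric.closure_ball_subset_closedBall
      (subset_trans (Metric.closedBall_subset_ball (by linarith)) hball)
  set F := Bᶜ with hF
  have hFcl : IsClosed F := Metric.isOpen_ball.isClosed_compl
  have haF : a ∈ F := fun haB => (hBsub (subset_closure haB)) (subset_closure haA)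
  have hzB : z ∈ B := Metric.mem_ball_self (by linarith)
  have hFne : F ≠ univ := fun h => (h ▸ mem_univ z : z ∈ F) hzB
  set P := connectedComponentIn F a with hP
  have hPc : IsCompact P := IrrAux.isCompact_connectedComponentIn hFcl a
  have hPcl : IsClosed P := hPc.isClosed
  have hPpc : IsPreconnected P := isPreconnected_connectedComponentIn
  have haP : a ∈ P := mem_connectedComponentIn haF
  have hPF : P ⊆ F := connectedComponentIn_subset F a
  have hPne : P ≠ univ := fun h => (hPF (h ▸ mem_univ z)) hzB
  have hbP : b ∉ P := fun hbP => hPne (hirr P hPc ⟨⟨a, haP⟩, hPpc⟩ haP hbP)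
  by_cases hmeet : ∃ K : Set X,
      IsCompact K ∧ IsPreconnected K ∧ b ∈ K ∧ K ≠ univ ∧ (K ∩ P).Nonempty
  · obtain ⟨K, hKc, hKpc, hbK, hKne, w, hwK, hwP⟩ := hmeet
    have hMuniv : K ∪ P = univ :=
      hirr (K ∪ P) (hKc.union hPc)
        ⟨⟨b, Or.inl hbK⟩, IsPreconnected.union w hwK hwP hKpc hPpc⟩
        (Or.inr haP) (Or.inl hbK)
    have hAP : A ⊆ P := by
      intro x hx
      have hxKP : x ∈ K ∪ P := hMuniv ▸ mem_univ x
      rcases hxKP with hxK | hxP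
      · exfalso
        rw [hA] at hx
        exact hKne (hx K hKc ⟨⟨b, hbK⟩, hKpc⟩ hxK hbK)
      · exact hxP
    have hclAP : closure A ⊆ P := closure_minimal hAP hPcl
    have hintP : (interior P).Nonempty := hint.mono (interior_mono hclAP)
    refine ⟨(interior P)ᶜ, (isOpen_interior.isClosed_compl).isCompact, ?_, ?_, ?_, ?_⟩
    · have := (IrrAux.compl_preconnected hPcl hPpc haP hbP
        (fun C hCc hCconn haC hbC => hirr C hCc hCconn haC hbC)).closure
      rwa [closure_compl] at this
    · exact fun h => hbP (interior_subset h)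
    · intro h
      obtain ⟨t, ht⟩ := hintP
      have : t ∈ (interior P)ᶜ := h ▸ mem_univ t
      exact this ht
    · have hsub : Pᶜ ⊆ (interior P)ᶜ := compl_subset_compl.mpr interior_subset
      have hzPc : z ∈ Pᶜ := fun hzP => (hPF hzP) hzB
      exact interior_maximal hsub hPcl.isOpen_compl hzPc
  · exfalso
    have hPA : P ⊆ A := by
      intro p' hp'
      rw [hA]
      intro C hCc hCconn hp'C hbC
      by_contra hCne
      exact hmeet ⟨C, hCc, hCconn.isPreconnected, hbC, hCne, ⟨p', hp'C, hp'⟩⟩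
    obtain ⟨w, hwP, hwfr⟩ := IrrAux.bumping hFcl hFne haF
    have hwA : w ∈ closure A := subset_closure (hPA hwP)
    have hwB : w ∈ closure B := by
      rw [show frontier F = frontier B from frontier_compl B] at hwfr
      exact frontier_subset_closure hwfr
    exact (hBsub hwB) hwA

end Auxiliary

/-- If `X` is a continuum irreducible between `a` and `b`, and the closure of the set
`A = {x | X is irreducible between x and b}` has nonempty interior, then the closure
of `A` is an indecomposable continuum. -/
theorem closure_irreducibleSet_indecomposable (X : Type) [MetricSpace X] [CompactSpace X] [ConnectedSpace X] [Nonempty X] (a b : X)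
    (hirr : ∀ K : Set X, IsCompact K → IsConnected K → a ∈ K → b ∈ K → K = Set.univ)
    (A : Set X)
    (hA : A = {x : X | ∀ K : Set X, IsCompact K → IsConnected K → x ∈ K → b ∈ K →
      K = Set.univ})
    (hint : (interior (closure A)).Nonempty) :
    IsCompact (closure A) ∧ IsConnected (closure A) ∧ IndecomposableSet (closure A) := by
  have haA : a ∈ A := by
    rw [hA]
    exact fun K hKc hKconn haK hbK => hirr K hKc hKconn haK hbK
  refine ⟨isClosed_closure.isCompact, ⟨⟨a, subset_closure haA⟩, ?_⟩, ?_⟩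
  · -- preconnectedness of `closure A`
    intro u v hu hv hcov hne_u hne_v
    by_contra h0
    rw [not_nonempty_iff_eq_empty] at h0
    set S := closure A \ v with hSdef
    set T := closure A \ u with hTdef
    have hScl : IsClosed S := isClosed_closure.sdiff hv
    have hTcl : IsClosed T := isClosed_closure.sdiff hu
    have hSne : S.Nonempty := by
      obtain ⟨p, hpA, hpu⟩ := hne_u
      by_cases hpv : p ∈ v
      · exfalso
        have : p ∈ closure A ∩ (u ∩ v) := ⟨hpA, hpu, hpv⟩
        rw [h0] at this
        exact this
      · exact ⟨p, hpA, hpv⟩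
    have hTne : T.Nonempty := by
      obtain ⟨p, hpA, hpv⟩ := hne_v
      by_cases hpu : p ∈ u
      · exfalso
        have : p ∈ closure A ∩ (u ∩ v) := ⟨hpA, hpu, hpv⟩
        rw [h0] at this
        exact this
      · exact ⟨p, hpA, hpu⟩
    have hdisj : Disjoint S T := by
      rw [disjoint_left]
      rintro x ⟨hxA, hxv⟩ ⟨_, hxu⟩
      rcases hcov hxA with h | h
      · exact hxu h
      · exact hxv h
    obtain ⟨u', v', hu', hv', hSu', hTv', huv'⟩ := normal_separation hScl hTcl hdisj
    have hclsub : closure A ⊆ u' ∪ v' := by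
      intro x hx
      by_cases hxv : x ∈ v
      · by_cases hxu : x ∈ u
        · exfalso
          have : x ∈ closure A ∩ (u ∩ v) := ⟨hx, hxu, hxv⟩
          rw [h0] at this
          exact this
        · exact Or.inr (hTv' ⟨hx, hxu⟩)
      · exact Or.inl (hSu' ⟨hx, hxv⟩)
    have hAu' : (A ∩ u').Nonempty := by
      obtain ⟨s₀, hs₀⟩ := hSne
      obtain ⟨α, hαu', hαA⟩ := _root_.mem_closure_iff.mp hs₀.1 u' hu' (hSu' hs₀)
      exact ⟨α, hαA, hαu'⟩
    have hAv' : (A ∩ v').Nonempty := by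
      obtain ⟨t₀, ht₀⟩ := hTne
      obtain ⟨β, hβv', hβA⟩ := _root_.mem_closure_iff.mp ht₀.1 v' hv' (hTv' ht₀)
      exact ⟨β, hβA, hβv'⟩
    set Z := (u' ∪ v')ᶜ with hZdef
    have hZA : ∀ z ∈ Z, z ∉ closure A := fun z hz hcl => hz (hclsub hcl)
    rcases eq_empty_or_nonempty Z with hZe | hZne
    · -- no exceptional set: `X = u' ∪ v'` contradicts connectedness of `X`
      have huniv : u' ∪ v' = univ := compl_empty_iff.mp hZe
      obtain ⟨α, hαA, hαu'⟩ := hAu'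
      obtain ⟨β, hβA, hβv'⟩ := hAv'
      obtain ⟨t, -, htu', htv'⟩ := isPreconnected_univ (α := X) u' v' hu' hv'
        (huniv ▸ subset_rfl) ⟨α, mem_univ α, hαu'⟩ ⟨β, mem_univ β, hβv'⟩
      exact (disjoint_left.mp huv' htu') htv'
    · -- cover the exceptional compact set `Z` by interiors of proper subcontinua through `b`
      have hzR : ∀ z : ↥Z, ∃ R : Set X,
          IsCompact R ∧ IsPreconnected R ∧ b ∈ R ∧ R ≠ univ ∧ (z : X) ∈ interior R :=
        fun z => IrrAux.exists_big a b hirr A hA hint (hZA z z.2)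
      choose R hRc hRpc hbR hRne hzint using hzR
      have hZc : IsCompact Z := ((hu'.union hv').isClosed_compl).isCompact
      have hcover : Z ⊆ ⋃ i : ↥Z, interior (R i) :=
        fun z hz => mem_iUnion.mpr ⟨⟨z, hz⟩, hzint ⟨z, hz⟩⟩
      obtain ⟨t, htcov⟩ := hZc.elim_finite_subcover (fun i => interior (R i))
        (fun i => isOpen_interior) hcover
      obtain ⟨z₀, hz₀⟩ := hZne
      have htne : t.Nonempty := by
        by_contra hte
        rw [Finset.not_nonempty_iff_eq_empty] at hte
        have := htcov hz₀
        simp [hte] at this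
      set K' : Set X := ⋃ i ∈ t, R i with hK'def
      have hK'c : IsCompact K' := t.isCompact_biUnion (fun i _ => hRc i)
      have hbK' : b ∈ K' := by
        obtain ⟨i₀, hi₀⟩ := htne
        exact mem_biUnion hi₀ (hbR i₀)
      have hK'pc : IsPreconnected K' := by
        rw [show K' = ⋃₀ ((fun i => R i) '' ↑t) from by rw [sUnion_image]; rfl]
        refine isPreconnected_sUnion b _ ?_ ?_
        · rintro s ⟨i, hi, rfl⟩
          exact hbR i
        · rintro s ⟨i, hi, rfl⟩
          exact hRpc i
      have haK' : a ∉ K' := by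
        intro h
        obtain ⟨i, hi, hai⟩ := mem_iUnion₂.mp h
        exact hRne i (hirr (R i) (hRc i) ⟨⟨b, hbR i⟩, hRpc i⟩ hai (hbR i))
      have hAK' : ∀ x ∈ A, x ∉ K' := by
        intro x hx hxK'
        obtain ⟨i, hi, hxi⟩ := mem_iUnion₂.mp hxK'
        rw [hA] at hx
        exact hRne i (hx (R i) (hRc i) ⟨⟨b, hbR i⟩, hRpc i⟩ hxi (hbR i))
      have hGpc : IsPreconnected K'ᶜ :=
        IrrAux.compl_preconnected hK'c.isClosed hK'pc hbK' haK'
          (fun C hCc hCconn hbC haC => hirr C hCc hCconn haC hbC)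
      have hGcov : K'ᶜ ⊆ u' ∪ v' := by
        intro x hx
        by_contra hxuv
        have hxZ : x ∈ Z := hxuv
        obtain ⟨i, hi, hxi⟩ := mem_iUnion₂.mp (htcov hxZ)
        exact hx (mem_biUnion hi (interior_subset hxi))
      obtain ⟨α, hαA, hαu'⟩ := hAu'
      obtain ⟨β, hβA, hβv'⟩ := hAv'
      obtain ⟨w, -, hwu', hwv'⟩ := hGpc u' v' hu' hv' hGcov
        ⟨α, hAK' α hαA, hαu'⟩ ⟨β, hAK' β hβA, hβv'⟩
      exact (disjoint_left.mp huv' hwu') hwv'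
  · -- indecomposability
    rintro ⟨H, K, hHc, hHconn, hKc, hKconn, hHsub, hKsub, hHne, hKne, huni⟩
    obtain ⟨P, hPc, hPconn, hPsub, hPneq, x, hxA, hxint⟩ :
        ∃ P : Set X, IsCompact P ∧ IsConnected P ∧ P ⊆ closure A ∧ P ≠ closure A ∧
          ∃ x, x ∈ A ∧ x ∈ interior P := by
      by_cases hWH : interior (closure A) ⊆ H
      · obtain ⟨w₀, hw₀⟩ := hint
        obtain ⟨x, hxW, hxA⟩ := _root_.mem_closure_iff.mp (interior_subset hw₀)
          (interior (closure A)) isOpen_interior hw₀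
        exact ⟨H, hHc, hHconn, hHsub, hHne, x, hxA,
          interior_maximal hWH isOpen_interior hxW⟩
      · rw [not_subset] at hWH
        obtain ⟨w₁, hw₁W, hw₁H⟩ := hWH
        have hOopen : IsOpen (interior (closure A) \ H) :=
          isOpen_interior.sdiff hHc.isClosed
        have hOsubK : interior (closure A) \ H ⊆ K := by
          intro y hy
          have hy' : y ∈ closure A := interior_subset hy.1
          rw [← huni] at hy'
          exact hy'.resolve_left hy.2
        obtain ⟨x, hxO, hxA⟩ := _root_.mem_closure_iff.mp (interior_subset hw₁W)
          (interior (closure A) \ H) hOopen ⟨hw₁W, hw₁H⟩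
        exact ⟨K, hKc, hKconn, hKsub, hKne, x, hxA,
          interior_maximal hOsubK hOopen hxO⟩
    rw [hA] at hxA
    have hPuniv : P ≠ univ := by
      intro h
      have hcl : closure A = univ := univ_subset_iff.mp (h ▸ hPsub)
      exact hPneq (h.trans hcl.symm)
    have hbP : b ∉ P := fun hbP =>
      hPuniv (hxA P hPc hPconn (interior_subset hxint) hbP)
    set F := (interior P)ᶜ with hFdef
    have hFcl : IsClosed F := isOpen_interior.isClosed_compl
    have hbF : b ∈ F := fun h => hbP (interior_subset h)
    have hFne : F ≠ univ := fun h => (h ▸ mem_univ x : x ∈ F) hxint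
    obtain ⟨w, hwQ, hwfr⟩ := IrrAux.bumping hFcl hFne hbF
    have hwP : w ∈ P := by
      rw [show frontier F = frontier (interior P) from frontier_compl _] at hwfr
      have hwcl : w ∈ closure P :=
        closure_mono interior_subset (frontier_subset_closure hwfr)
      rwa [hPc.isClosed.closure_eq] at hwcl
    have hQc : IsCompact (connectedComponentIn F b) :=
      IrrAux.isCompact_connectedComponentIn hFcl b
    have hbQ : b ∈ connectedComponentIn F b := mem_connectedComponentIn hbF
    have hMuniv : connectedComponentIn F b ∪ P = univ :=
      hxA (connectedComponentIn F b ∪ P) (hQc.union hPc)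
        ⟨⟨b, Or.inl hbQ⟩, IsPreconnected.union w hwQ hwP
          isPreconnected_connectedComponentIn hPconn.isPreconnected⟩
        (Or.inr (interior_subset hxint)) (Or.inl hbQ)
    have hQne : connectedComponentIn F b ≠ univ := by
      intro h
      have : x ∈ F := connectedComponentIn_subset F b (h ▸ mem_univ x)
      exact this hxint
    have hAP : A ⊆ P := by
      intro y hy
      have hyM : y ∈ connectedComponentIn F b ∪ P := hMuniv ▸ mem_univ y
      rcases hyM with hyQ | hyP
      · exfalso
        rw [hA] at hy
        exact hQne (hy (connectedComponentIn F b) hQc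
          ⟨⟨b, hbQ⟩, isPreconnected_connectedComponentIn⟩ hyQ hbQ)
      · exact hyP
    exact hPneq (Subset.antisymm hPsub (closure_minimal hAP hPc.isClosed))
end

section
/- Let X be a continuum irreducible between a and b, and let A = {x ∈ X : X is irreducible between x and b}. Then A is connected. -/
open Set Topology

/-- Separated sets in a metric space can be enclosed in disjoint open sets. -/
private lemma sep_nhds {X : Type} [MetricSpace X] {P Q : Set X}
    (h1 : Disjoint (closure P) Q) (h2 : Disjoint P (closure Q))
    (hQ : Q.Nonempty) (hP : P.Nonempty) :
    ∃ U V : Set X, IsOpen U ∧ IsOpen V ∧ P ⊆ U ∧ Q ⊆ V ∧ Disjoint U V := by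
  refine ⟨{x | Metric.infDist x P < Metric.infDist x Q},
    {x | Metric.infDist x Q < Metric.infDist x P},
    isOpen_lt (Metric.continuous_infDist_pt P) (Metric.continuous_infDist_pt Q),
    isOpen_lt (Metric.continuous_infDist_pt Q) (Metric.continuous_infDist_pt P), ?_, ?_, ?_⟩
  · intro x hx
    have h0 : Metric.infDist x P = 0 := Metric.infDist_zero_of_mem hx
    have hxQ : x ∉ closure Q := fun h => (Set.disjoint_left.mp h2) hx h
    have hpos : 0 < Metric.infDist x Q := by
      rw [← Metric.infDist_closure]
      exact (isClosed_closure.notMem_iff_infDist_pos hQ.closure).mp hxQ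
    simpa [h0] using hpos
  · intro x hx
    have h0 : Metric.infDist x Q = 0 := Metric.infDist_zero_of_mem hx
    have hxP : x ∉ closure P := fun h => (Set.disjoint_left.mp h1) h hx
    have hpos : 0 < Metric.infDist x P := by
      rw [← Metric.infDist_closure]
      exact (isClosed_closure.notMem_iff_infDist_pos hP.closure).mp hxP
    simpa [h0] using hpos
  · rw [Set.disjoint_left]
    intro x hx hx'
    simp only [mem_setOf_eq] at hx hx'
    exact lt_asymm hx hx'

/-- Boundary bumping: in a continuum, the connected component of a point in a proper closed
subset meets the frontier of that subset. -/
private lemma bump_s6 {X : Type} [TopologicalSpace X] [T2Space X] [CompactSpace X]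
    [ConnectedSpace X] {E : Set X} (hE : IsClosed E) {p : X} (hp : p ∈ E) (hne : E ≠ univ) :
    ∃ z ∈ connectedComponentIn E p, z ∈ frontier E := by
  by_contra hcon
  push_neg at hcon
  haveI : CompactSpace E := isCompact_iff_compactSpace.mp hE.isCompact
  set y : E := ⟨p, hp⟩ with hy
  have hcc : connectedComponent y = ⋂ s : { s : Set E // IsClopen s ∧ y ∈ s }, (s : Set E) :=
    connectedComponent_eq_iInter_isClopen y
  set Fr : Set E := Subtype.val ⁻¹' frontier E with hFrdef
  have hFrcl : IsClosed Fr := isClosed_frontier.preimage continuous_subtype_val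
  have hdisj : Fr ∩ ⋂ s : { s : Set E // IsClopen s ∧ y ∈ s }, (s : Set E) = ∅ := by
    rw [← hcc]
    ext w
    simp only [mem_inter_iff, mem_empty_iff_false, iff_false, not_and]
    intro hw1 hw2
    exact hcon (w : X) (by rw [connectedComponentIn_eq_image hp]; exact ⟨w, hw2, rfl⟩) hw1
  obtain ⟨t, ht⟩ := hFrcl.isCompact.elim_finite_subfamily_closed _ (fun s => s.2.1.1) hdisj
  set Z : Set E := ⋂ s ∈ t, (s : Set E) with hZdef
  have hZclopen : IsClopen Z := isClopen_biInter_finset fun s _ => s.2.1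
  have hyZ : y ∈ Z := mem_iInter₂.mpr fun s _ => s.2.2
  set D : Set X := Subtype.val '' Z with hDdef
  have hpD : p ∈ D := ⟨y, hyZ, rfl⟩
  have hDE : D ⊆ E := Subtype.coe_image_subset E Z
  have hDfr : ∀ x ∈ D, x ∉ frontier E := by
    rintro x ⟨w, hwZ, rfl⟩ hxfr
    have : w ∈ Fr ∩ Z := ⟨hxfr, hwZ⟩
    rw [ht] at this
    exact this.elim
  have hDint : D ⊆ interior E := by
    intro x hx
    by_contra hxi
    exact hDfr x hx (by rw [hE.frontier_eq]; exact ⟨hDE hx, hxi⟩)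
  have hDclosed : IsClosed D := (hZclopen.1.isCompact.image continuous_subtype_val).isClosed
  obtain ⟨O, hO, hOZ⟩ := isOpen_induced_iff.mp hZclopen.2
  have hDeq : D = E ∩ O := by rw [hDdef, ← hOZ, Subtype.image_preimage_coe]
  have hDopen : IsOpen D := by
    have : D = interior E ∩ O := by
      apply Subset.antisymm
      · exact fun x hx => ⟨hDint hx, (hDeq ▸ hx).2⟩
      · intro x hx
        rw [hDeq]
        exact ⟨interior_subset hx.1, hx.2⟩
    rw [this]
    exact isOpen_interior.inter hO
  have : D = univ := IsClopen.eq_univ ⟨hDclosed, hDopen⟩ ⟨p, hpD⟩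
  exact hne (univ_subset_iff.mp (this ▸ hDE))

/-- If `X` is a continuum irreducible between `a` and `b`, then the set
`A = {x | X is irreducible between x and b}` is connected. -/
theorem irreducibleSet_isConnected (X : Type) [MetricSpace X] [CompactSpace X] [ConnectedSpace X] [Nonempty X] (a b : X)
    (hirr : ∀ K : Set X, IsCompact K → IsConnected K → a ∈ K → b ∈ K → K = Set.univ) :
    IsConnected {x : X | ∀ K : Set X, IsCompact K → IsConnected K → x ∈ K → b ∈ K →
      K = Set.univ} := by
  set A : Set X := {x : X | ∀ K : Set X, IsCompact K → IsConnected K → x ∈ K → b ∈ K →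
      K = Set.univ} with hAdef
  constructor
  · exact ⟨a, hirr⟩
  rintro u v hu hv hsub ⟨p, hpA, hpu⟩ ⟨q, hqA, hqv⟩
  by_contra hne
  rw [Set.not_nonempty_iff_eq_empty] at hne
  have hAuv : ∀ x, x ∈ A → x ∈ u → x ∈ v → False := by
    intro x h1 h2 h3
    have : x ∈ A ∩ (u ∩ v) := ⟨h1, h2, h3⟩
    rw [hne] at this
    exact this
  -- the two pieces are separated
  have h1 : Disjoint (closure (A ∩ u)) (A ∩ v) := by
    rw [Set.disjoint_left]
    rintro x hx ⟨hxA, hxv⟩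
    obtain ⟨y, hyv, hyA, hyu⟩ := mem_closure_iff.mp hx v hv hxv
    exact hAuv y hyA hyu hyv
  have h2 : Disjoint (A ∩ u) (closure (A ∩ v)) := by
    rw [Set.disjoint_left]
    rintro x ⟨hxA, hxu⟩ hx
    obtain ⟨y, hyu, hyA, hyv⟩ := mem_closure_iff.mp hx u hu hxu
    exact hAuv y hyA hyu hyv
  obtain ⟨U, V, hU, hV, hPU, hQV, hUV⟩ :=
    sep_nhds h1 h2 ⟨q, hqA, hqv⟩ ⟨p, hpA, hpu⟩
  have hAUV : A ⊆ U ∪ V := fun x hx => (hsub hx).elim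
    (fun h => Or.inl (hPU ⟨hx, h⟩)) (fun h => Or.inr (hQV ⟨hx, h⟩))
  set E : Set X := closure U with hEdef
  have hEcl : IsClosed E := isClosed_closure
  have hpE : p ∈ E := subset_closure (hPU ⟨hpA, hpu⟩)
  have hqE : q ∉ E := fun h =>
    Set.disjoint_left.mp (hUV.closure_left hV) h (hQV ⟨hqA, hqv⟩)
  have hEne : E ≠ univ := fun h => hqE (h ▸ mem_univ q)
  obtain ⟨z, hzC, hzfr⟩ := bump_s6 hEcl hpE hEne
  have hzE : z ∈ E := connectedComponentIn_subset E p hzC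
  have hzint : z ∉ interior E := by
    rw [hEcl.frontier_eq] at hzfr
    exact hzfr.2
  have hzU : z ∉ U := fun h => hzint (interior_maximal subset_closure hU h)
  have hzV : z ∉ V := fun h => Set.disjoint_left.mp (hUV.closure_left hV) hzE h
  have hzA : z ∉ A := fun h => (hAUV h).elim hzU hzV
  rw [hAdef, mem_setOf_eq] at hzA
  push_neg at hzA
  obtain ⟨K, hKc, hKconn, hzK, hbK, hKne⟩ := hzA
  set C : Set X := connectedComponentIn E p with hCdef
  have hCE : C ⊆ E := connectedComponentIn_subset E p
  have hCconn : IsConnected C := isConnected_connectedComponentIn_iff.mpr hpE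
  have hCcomp : IsCompact C := by
    rw [hCdef, connectedComponentIn_eq_image hpE]
    haveI : CompactSpace E := isCompact_iff_compactSpace.mp hEcl.isCompact
    exact isClosed_connectedComponent.isCompact.image continuous_subtype_val
  have hDconn : IsConnected (K ∪ C) := IsConnected.union ⟨z, hzK, hzC⟩ hKconn hCconn
  have huniv : K ∪ C = univ :=
    hpA (K ∪ C) (hKc.union hCcomp) hDconn (Or.inr (mem_connectedComponentIn hpE)) (Or.inl hbK)
  have hq : q ∈ K ∪ C := huniv ▸ mem_univ q
  rcases hq with hq | hq
  · exact hKne (hqA K hKc hKconn hq hbK)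
  · exact hqE (hCE hq)
end

section
/- Let X be a hereditarily unicoherent continuum and x ∈ X. If the meager composant M_x is not closed in X, then the closure of M_x contains an indecomposable subcontinuum with nonempty interior in X. -/
set_option linter.unusedSectionVars false
set_option linter.unusedVariables false
open Set Topology

open Set Topology

variable {X : Type} [MetricSpace X] [CompactSpace X] [ConnectedSpace X]

/-- An open set contained in a nowhere dense set is empty. -/
lemma open_subset_nwd {s U : Set X} (hs : IsNowhereDense s) (hU : IsOpen U) (hUs : U ⊆ s) :
    U = ∅ := by
  have : U ⊆ interior (closure s) :=
    fun u hu => interior_maximal (hUs.trans subset_closure) hU hu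
  rw [hs] at this
  exact eq_empty_of_subset_empty this

/-- Union of two nowhere dense sets is nowhere dense. -/
lemma nwd_union {s t : Set X} (hs : IsNowhereDense s) (ht : IsNowhereDense t) :
    IsNowhereDense (s ∪ t) := by
  rw [IsNowhereDense, closure_union]
  by_contra h
  set O := interior (closure s ∪ closure t) with hO
  have hOopen : IsOpen O := isOpen_interior
  have hOsub : O ⊆ closure s ∪ closure t := interior_subset
  have h1 : O \ closure s ⊆ closure t := by
    intro u hu
    rcases hOsub hu.1 with h' | h'
    · exact absurd h' hu.2
    · exact h'
  have h2 : O \ closure s = ∅ :=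
    open_subset_nwd ht.closure (hOopen.sdiff isClosed_closure) h1
  have h3 : O ⊆ closure s := by
    intro u hu
    by_contra hns
    have : u ∈ O \ closure s := ⟨hu, hns⟩
    rw [h2] at this
    exact this
  have h4 : O = ∅ := open_subset_nwd hs.closure hOopen h3
  exact h h4

lemma nwd_subset {s t : Set X} (ht : IsNowhereDense t) (hst : s ⊆ t) : IsNowhereDense s := by
  rw [IsNowhereDense]
  have : interior (closure s) ⊆ interior (closure t) :=
    interior_mono (closure_mono hst)
  rw [ht] at this
  exact eq_empty_of_subset_empty this

variable {X : Type} [MetricSpace X] [CompactSpace X] [ConnectedSpace X]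

/-- The intersection of a directed family of nonempty compact preconnected sets is
preconnected. -/
lemma isPreconnected_iInter_directed {ι : Type} [Nonempty ι] (t : ι → Set X)
    (hdir : Directed (· ⊇ ·) t) (hcomp : ∀ i, IsCompact (t i))
    (hconn : ∀ i, IsPreconnected (t i)) (hne : ∀ i, (t i).Nonempty) :
    IsPreconnected (⋂ i, t i) := by
  set K := ⋂ i, t i with hK
  have hKclosed : IsClosed K := isClosed_iInter fun i => (hcomp i).isClosed
  intro U V hU hV hsub ⟨a, haK, haU⟩ ⟨b, hbK, hbV⟩
  by_contra hempty
  rw [Set.not_nonempty_iff_eq_empty] at hempty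
  -- A and B: the two closed pieces of K
  set A := K \ V with hA
  set B := K \ U with hB
  have hAclosed : IsClosed A := hKclosed.sdiff hV
  have hBclosed : IsClosed B := hKclosed.sdiff hU
  have haA : a ∈ A := by
    refine ⟨haK, fun haV => ?_⟩
    have : a ∈ K ∩ (U ∩ V) := ⟨haK, haU, haV⟩
    rw [hempty] at this; exact this
  have hbB : b ∈ B := by
    refine ⟨hbK, fun hbU => ?_⟩
    have : b ∈ K ∩ (U ∩ V) := ⟨hbK, hbU, hbV⟩
    rw [hempty] at this; exact this
  have hdisj : Disjoint A B := by
    rw [Set.disjoint_iff]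
    rintro u ⟨⟨huK, hunV⟩, ⟨_, hunU⟩⟩
    rcases hsub huK with h | h
    · exact hunU h
    · exact hunV h
  obtain ⟨U', V', hU', hV', hAU', hBV', hUV'⟩ :=
    SeparatedNhds.of_isCompact_isCompact hAclosed.isCompact hBclosed.isCompact hdisj
  have hKsub : K ⊆ U' ∪ V' := by
    intro k hk
    rcases hsub hk with h | h
    · by_cases h' : k ∈ V
      · have : k ∈ K ∩ (U ∩ V) := ⟨hk, h, h'⟩
        rw [hempty] at this; exact this.elim
      · exact Or.inl (hAU' ⟨hk, h'⟩)
    · by_cases h' : k ∈ U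
      · have : k ∈ K ∩ (U ∩ V) := ⟨hk, h', h⟩
        rw [hempty] at this; exact this.elim
      · exact Or.inr (hBV' ⟨hk, h'⟩)
  -- find a single member of the family inside U' ∪ V'
  have hexists : ∃ i, t i ⊆ U' ∪ V' := by
    by_contra hforall
    push_neg at hforall
    have hne' : ∀ i, (t i \ (U' ∪ V')).Nonempty := by
      intro i
      rcases Set.not_subset.mp (hforall i) with ⟨u, hu1, hu2⟩
      exact ⟨u, hu1, hu2⟩
    have hdir' : Directed (· ⊇ ·) (fun i => t i \ (U' ∪ V')) := by
      intro i j
      rcases hdir i j with ⟨k, hk1, hk2⟩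
      exact ⟨k, diff_subset_diff_left hk1, diff_subset_diff_left hk2⟩
    have hcomp' : ∀ i, IsCompact (t i \ (U' ∪ V')) := fun i =>
      ((hcomp i).isClosed.sdiff (hU'.union hV')).isCompact
    have hclosed' : ∀ i, IsClosed (t i \ (U' ∪ V')) := fun i =>
      (hcomp i).isClosed.sdiff (hU'.union hV')
    have := IsCompact.nonempty_iInter_of_directed_nonempty_isCompact_isClosed
      (fun i => t i \ (U' ∪ V')) hdir' hne' hcomp' hclosed'
    rcases this with ⟨u, hu⟩
    rw [mem_iInter] at hu
    have huK : u ∈ K := mem_iInter.mpr fun i => (hu i).1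
    exact (hu (Classical.arbitrary ι)).2 (hKsub huK)
  rcases hexists with ⟨i, hi⟩
  have h1 : (t i ∩ U').Nonempty := ⟨a, (mem_iInter.mp haK) i, hAU' haA⟩
  have h2 : (t i ∩ V').Nonempty := ⟨b, (mem_iInter.mp hbK) i, hBV' hbB⟩
  have := hconn i U' V' hU' hV' hi h1 h2
  rcases this with ⟨u, _, hu2⟩
  exact (hUV'.le_bot hu2 : u ∈ (⊥ : Set X))
open Set Topology

section Bracket
variable {X : Type} [MetricSpace X] [CompactSpace X] [ConnectedSpace X]

/-- The family of subcontinua containing `F`. -/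
def contFam (F : Set X) : Set (Set X) := {S | IsCompact S ∧ IsPreconnected S ∧ F ⊆ S}

/-- The minimal subcontinuum containing a nonempty closed set `F` in a hereditarily
unicoherent continuum. -/
def br (F : Set X) : Set X := ⋂₀ contFam F

lemma univ_mem_contFam (F : Set X) : univ ∈ contFam F :=
  ⟨isCompact_univ, isPreconnected_univ, subset_univ F⟩

lemma br_subset_of_mem {F S : Set X} (hS : S ∈ contFam F) : br F ⊆ S :=
  sInter_subset_of_mem hS

lemma subset_br {F : Set X} : F ⊆ br F := by
  intro u hu
  rw [br, mem_sInter]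
  exact fun S hS => hS.2.2 hu

lemma br_isClosed (F : Set X) : IsClosed (br F) := by
  apply isClosed_sInter
  exact fun S hS => hS.1.isClosed

lemma br_isCompact (F : Set X) : IsCompact (br F) := (br_isClosed F).isCompact

lemma br_nonempty {F : Set X} (hF : F.Nonempty) : (br F).Nonempty :=
  hF.mono subset_br

lemma contFam_directed (hX : HereditarilyUnicoherent X) {F : Set X} (hF : F.Nonempty) :
    ∀ S ∈ contFam F, ∀ T ∈ contFam F, S ∩ T ∈ contFam F := by
  rintro S ⟨hSc, hSp, hSF⟩ T ⟨hTc, hTp, hTF⟩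
  refine ⟨hSc.inter_right hTc.isClosed, ?_, subset_inter hSF hTF⟩
  exact hX S T hSc ⟨hF.mono hSF, hSp⟩ hTc ⟨hF.mono hTF, hTp⟩

lemma br_isPreconnected (hX : HereditarilyUnicoherent X) {F : Set X} (hF : F.Nonempty) :
    IsPreconnected (br F) := by
  rw [br, sInter_eq_iInter]
  haveI : Nonempty (contFam F) := ⟨⟨univ, univ_mem_contFam F⟩⟩
  apply isPreconnected_iInter_directed
  · rintro ⟨S, hS⟩ ⟨T, hT⟩
    exact ⟨⟨S ∩ T, contFam_directed hX hF S hS T hT⟩, inter_subset_left, inter_subset_right⟩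
  · exact fun ⟨S, hS⟩ => hS.1
  · exact fun ⟨S, hS⟩ => hS.2.1
  · exact fun ⟨S, hS⟩ => hF.mono hS.2.2

lemma br_mem_contFam (hX : HereditarilyUnicoherent X) {F : Set X} (hF : F.Nonempty) :
    br F ∈ contFam F :=
  ⟨br_isCompact F, br_isPreconnected hX hF, subset_br⟩

/-- minimality: the bracket is contained in every subcontinuum containing F -/
lemma br_min {F S : Set X} (hSc : IsCompact S) (hSp : IsPreconnected S) (hFS : F ⊆ S) :
    br F ⊆ S :=
  br_subset_of_mem ⟨hSc, hSp, hFS⟩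

/-- bracket of pairs -/
lemma mem_br_left {a b : X} : a ∈ br {a, b} := subset_br (by simp)
lemma mem_br_right {a b : X} : b ∈ br {a, b} := subset_br (by simp)

lemma br_pair_comm (a b : X) : br {a, b} = br {b, a} := by rw [Set.pair_comm]

lemma br_pair_mono {a b : X} {S : Set X} (hSc : IsCompact S) (hSp : IsPreconnected S)
    (ha : a ∈ S) (hb : b ∈ S) : br {a, b} ⊆ S :=
  br_min hSc hSp (by rintro u (rfl | rfl) <;> assumption)

/-- the triangle inclusion `br {a,c} ⊆ br {a,b} ∪ br {b,c}` -/
lemma br_triangle (hX : HereditarilyUnicoherent X) (a b c : X) :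
    br {a, c} ⊆ br {a, b} ∪ br {b, c} := by
  apply br_pair_mono
  · exact (br_isCompact _).union (br_isCompact _)
  · exact IsPreconnected.union b mem_br_right mem_br_left
      (br_isPreconnected hX ⟨a, by simp⟩) (br_isPreconnected hX ⟨b, by simp⟩)
  · exact Or.inl mem_br_left
  · exact Or.inr mem_br_right

lemma br_singleton (a : X) : br {a} = {a} := by
  apply Subset.antisymm
  · exact br_min isCompact_singleton isPreconnected_singleton (subset_refl _)
  · exact subset_br

end Bracket
section Main

variable {X : Type} [MetricSpace X] [CompactSpace X] [ConnectedSpace X] [Nonempty X]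

/-- relation: the minimal continuum joining two points is nowhere dense -/
def NwdRel (a b : X) : Prop := IsNowhereDense (br {a, b})

lemma NwdRel.symm' {a b : X} (h : NwdRel a b) : NwdRel b a := by
  rwa [NwdRel, br_pair_comm]

lemma NwdRel.trans' (hX : HereditarilyUnicoherent X) {a b c : X}
    (h1 : NwdRel a b) (h2 : NwdRel b c) : NwdRel a c :=
  nwd_subset (nwd_union h1 h2) (br_triangle hX a b c)

lemma mem_meagerComposant_iff (hX : HereditarilyUnicoherent X) (x m : X) :
    m ∈ MeagerComposant X x ↔ NwdRel x m := by
  constructor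
  · rintro ⟨L, ⟨hLc, hLconn, hLnwd, hxL⟩, hmL⟩
    exact nwd_subset hLnwd (br_pair_mono hLc hLconn.2 hxL hmL)
  · intro h
    exact ⟨br {x, m}, ⟨br_isCompact _, ⟨⟨x, mem_br_left⟩,
      br_isPreconnected hX ⟨x, by simp⟩⟩, h, mem_br_left⟩, mem_br_right⟩

end Main
/-- If a meager composant of a hereditarily unicoherent continuum is not closed, then
its closure contains an indecomposable subcontinuum with nonempty interior in `X`. -/
theorem exists_indecomposable_with_interior_of_not_closed (X : Type) [MetricSpace X] [CompactSpace X] [ConnectedSpace X] [Nonempty X]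
    (hX : HereditarilyUnicoherent X) (x : X)
    (hnc : ¬ IsClosed (MeagerComposant X x)) :
    ∃ K : Set X, K ⊆ closure (MeagerComposant X x) ∧ IsCompact K ∧ IsConnected K ∧
      IndecomposableSet K ∧ (interior K).Nonempty := by
  classical
  set M := MeagerComposant X x with hMdef
  have hMne : M.Nonempty := by
    rcases M.eq_empty_or_nonempty with h | h
    · rw [h] at hnc; exact absurd isClosed_empty hnc
    · exact h
  have hxM : x ∈ M := by
    obtain ⟨m, L, hL, _⟩ := hMne
    exact ⟨L, hL, hL.2.2.2⟩
  have hdeg : ∃ a b : X, a ≠ b := by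
    obtain ⟨L, ⟨hLc, hLconn, hLnwd, hxL⟩, _⟩ := hxM
    have hLne : L ≠ univ := by
      intro h
      have h2 : interior (closure L) = ∅ := hLnwd
      rw [h, closure_univ, interior_univ] at h2
      exact (univ_nonempty (α := X)).ne_empty h2
    obtain ⟨y, hy⟩ : ∃ y, y ∉ L := by
      by_contra h; push_neg at h; exact hLne (eq_univ_of_forall h)
    exact ⟨x, y, fun h => hy (h ▸ hxL)⟩
  have hsing : ∀ a : X, IsNowhereDense ({a} : Set X) := by
    intro a
    rw [isClosed_singleton.isNowhereDense_iff]
    by_contra h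
    rw [← ne_eq, ← nonempty_iff_ne_empty] at h
    obtain ⟨p, hp⟩ := h
    have hpa : p ∈ ({a} : Set X) := interior_subset hp
    rw [mem_singleton_iff] at hpa
    subst hpa
    have hio : interior ({p} : Set X) = {p} :=
      Subset.antisymm interior_subset (singleton_subset_iff.mpr hp)
    have hop : IsOpen ({p} : Set X) := hio ▸ isOpen_interior
    obtain ⟨u, v, huv⟩ := hdeg
    have hbne : ∃ b : X, b ≠ p := by
      by_cases h : u = p
      · exact ⟨v, fun hv => huv (by rw [h, hv])⟩
      · exact ⟨u, h⟩
    obtain ⟨b, hb⟩ := hbne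
    have := isPreconnected_univ (u := ({p} : Set X)) (v := {p}ᶜ) hop isOpen_compl_singleton
      (by
        intro q _
        by_cases h : q = p
        · exact Or.inl h
        · exact Or.inr h)
      ⟨p, trivial, rfl⟩ ⟨b, trivial, hb⟩
    obtain ⟨q, _, hq1, hq2⟩ := this
    exact hq2 hq1
  have hRrefl : ∀ a : X, NwdRel a a := by
    intro a
    have h : ({a, a} : Set X) = {a} := pair_eq_singleton a
    rw [NwdRel, h, br_singleton]
    exact hsing a
  have hMnwd : ∀ m ∈ M, IsNowhereDense (br {x, m}) :=
    fun m hm => (mem_meagerComposant_iff hX x m).mp hm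
  have hMofnwd : ∀ m : X, IsNowhereDense (br {x, m}) → m ∈ M :=
    fun m h => (mem_meagerComposant_iff hX x m).mpr h
  have hMconn : IsPreconnected M := by
    rw [hMdef, MeagerComposant]
    exact isPreconnected_sUnion x _ (fun L hL => hL.2.2.2) (fun L hL => hL.2.1.2)
  set C := closure M with hCdef
  have hCclosed : IsClosed C := isClosed_closure
  have hCc : IsCompact C := hCclosed.isCompact
  have hCconn : IsPreconnected C := hMconn.closure
  have hxC : x ∈ C := subset_closure hxM
  have hMdense : ∀ O : Set X, IsOpen O → O.Nonempty → O ⊆ C → (O ∩ M).Nonempty := by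
    intro O hO hOne hOC
    obtain ⟨p, hp⟩ := hOne
    exact mem_closure_iff.mp (hOC hp) O hO hp
  obtain ⟨z, hzC, hzM⟩ : ∃ z, z ∈ C ∧ z ∉ M := by
    by_contra h
    push_neg at h
    have hCM : C = M := Subset.antisymm h subset_closure
    exact hnc (hCM ▸ hCclosed)
  have hzrel : ∀ a : X, NwdRel z a → a ∉ M := by
    intro a hza haM
    exact hzM (hMofnwd z (NwdRel.trans' hX (hMnwd a haM) (NwdRel.symm' hza)))
  set T := br ({x, z} : Set X) with hTdef
  have hTC : T ⊆ C := br_pair_mono hCc hCconn hxC hzC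
  have hTnnwd : ¬ IsNowhereDense T := fun h => hzM (hMofnwd z h)
  set V := interior T with hVdef
  have hVopen : IsOpen V := isOpen_interior
  have hVne : V.Nonempty := by
    rw [nonempty_iff_ne_empty]
    intro h
    exact hTnnwd (((br_isClosed _).isNowhereDense_iff).mpr h)
  have hVT : V ⊆ T := interior_subset
  have hVC : V ⊆ C := hVT.trans hTC
  have hclV : closure V ⊆ T := (br_isClosed _).closure_subset_iff.mpr hVT
  have hclVC : closure V ⊆ C := hclV.trans hTC
  have htransfer : ∀ m ζ w : X, V ⊆ br {m, ζ} → IsNowhereDense (br {w, ζ}) → V ⊆ br {m, w} := by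
    intro m ζ w h1 h2
    intro v hv
    by_contra hnB
    have hsub : V \ br {m, w} ⊆ br {w, ζ} := by
      intro u hu
      rcases br_triangle hX m w ζ (h1 hu.1) with h | h
      · exact absurd h hu.2
      · exact h
    have h0 : V \ br {m, w} = ∅ :=
      open_subset_nwd h2 (hVopen.sdiff (br_isClosed _)) hsub
    have hvv : v ∈ V \ br {m, w} := ⟨hv, hnB⟩
    rw [h0] at hvv
    exact hvv
  have hPzd : ∀ m ∈ M, V ⊆ br {m, z} := by
    intro m hm v hv
    by_contra hnB
    have hsub : V \ br {m, z} ⊆ br {x, m} := by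
      intro u hu
      rcases br_triangle hX x m z (hVT hu.1) with h | h
      · exact h
      · exact absurd h hu.2
    have h0 : V \ br {m, z} = ∅ :=
      open_subset_nwd (hMnwd m hm) (hVopen.sdiff (br_isClosed _)) hsub
    have hvv : v ∈ V \ br {m, z} := ⟨hv, hnB⟩
    rw [h0] at hvv
    exact hvv
  set Mz := {a : X | NwdRel z a} with hMzdef
  have hzMz : z ∈ Mz := hRrefl z
  have hMzC_sub : ∀ a ∈ Mz ∩ C, br {z, a} ⊆ Mz ∩ C := by
    rintro a ⟨haz, haC⟩ u hu
    constructor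
    · exact nwd_subset haz (br_pair_mono (br_isCompact _)
        (br_isPreconnected hX ⟨z, by simp⟩) mem_br_left hu)
    · exact br_pair_mono hCc hCconn hzC haC hu
  have hMzCconn : IsPreconnected (Mz ∩ C) := by
    have heq : Mz ∩ C = ⋃₀ {S' | ∃ a ∈ Mz ∩ C, S' = br {z, a}} := by
      apply Subset.antisymm
      · intro a ha
        exact ⟨br {z, a}, ⟨a, ha, rfl⟩, mem_br_right⟩
      · rintro u ⟨S', ⟨a, ha, rfl⟩, hu⟩
        exact hMzC_sub a ha hu
    rw [heq]
    apply isPreconnected_sUnion z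
    · rintro S' ⟨a, ha, rfl⟩; exact mem_br_left
    · rintro S' ⟨a, ha, rfl⟩; exact br_isPreconnected hX ⟨z, by simp⟩
  set S := closure (Mz ∩ C) with hSdef
  have hSclosed : IsClosed S := isClosed_closure
  have hSc : IsCompact S := hSclosed.isCompact
  have hSconn : IsPreconnected S := hMzCconn.closure
  have hSC : S ⊆ C := closure_minimal inter_subset_right hCclosed
  by_cases hS : IsNowhereDense S
  · -- Zorn branch
    set P : X → Prop := fun ζ => ζ ∈ C ∧ NwdRel z ζ ∧ ∀ m ∈ M, V ⊆ br {m, ζ} with hPdef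
    have hPz' : P z := ⟨hzC, hRrefl z, hPzd⟩
    set r : {ζ : X // P ζ} → {ζ : X // P ζ} → Prop :=
      fun a b => br (closure V ∪ {b.val}) ⊆ br (closure V ∪ {a.val}) with hrdef
    have hζZ : ∀ ζ : X, ζ ∈ br (closure V ∪ {ζ}) := fun ζ => subset_br (Or.inr rfl)
    have hclVZ : ∀ ζ : X, closure V ⊆ br (closure V ∪ {ζ}) :=
      fun ζ => (subset_union_left).trans subset_br
    have hZne : ∀ ζ : X, (closure V ∪ {ζ} : Set X).Nonempty := fun ζ => ⟨ζ, Or.inr rfl⟩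
    have hZfact : ∀ ζ : X, ∀ SS : Set X, IsCompact SS → IsPreconnected SS →
        closure V ⊆ SS → ζ ∈ SS → br (closure V ∪ {ζ}) ⊆ SS := by
      intro ζ SS h1 h2 h3 h4
      exact br_min h1 h2 (union_subset h3 (singleton_subset_iff.mpr h4))
    have hZC : ∀ ζ : X, ζ ∈ C → br (closure V ∪ {ζ}) ⊆ C :=
      fun ζ hζ => hZfact ζ C hCc hCconn hclVC hζ
    have hchains : ∀ c : Set {ζ : X // P ζ}, IsChain r c → ∃ ub, ∀ a ∈ c, r a ub := by
      intro c hc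
      rcases c.eq_empty_or_nonempty with rfl | ⟨ζ0, hζ0⟩
      · exact ⟨⟨z, hPz'⟩, by simp⟩
      haveI : Nonempty c := ⟨⟨ζ0, hζ0⟩⟩
      have hfip : (⋂ a : c, (S ∩ br (closure V ∪ {a.val.val}))).Nonempty := by
        apply IsCompact.nonempty_iInter_of_directed_nonempty_isCompact_isClosed
        · rintro a b
          by_cases hab : a.val = b.val
          · have hab2 : (a.val.val : X) = b.val.val := by rw [hab]
            refine ⟨b, ?_, subset_refl _⟩
            show S ∩ br (closure V ∪ {b.val.val}) ⊆ S ∩ br (closure V ∪ {a.val.val})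
            rw [hab2]
          · rcases hc a.2 b.2 hab with h | h
            · exact ⟨b, inter_subset_inter (subset_refl S) h, subset_refl _⟩
            · exact ⟨a, subset_refl _, inter_subset_inter (subset_refl S) h⟩
        · intro a
          exact ⟨a.val.val, subset_closure ⟨a.val.2.2.1, a.val.2.1⟩, hζZ _⟩
        · intro a
          exact hSc.inter_right (br_isClosed _)
        · intro a
          exact hSclosed.inter (br_isClosed _)
      obtain ⟨ζs, hζs⟩ := hfip
      rw [mem_iInter] at hζs
      have hζsS : ζs ∈ S := (hζs ⟨ζ0, hζ0⟩).1
      have hζsZ : ∀ a : {ζ : X // P ζ}, a ∈ c → ζs ∈ br (closure V ∪ {a.val}) :=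
        fun a ha => (hζs ⟨a, ha⟩).2
      have hζ0S : ζ0.val ∈ S := subset_closure ⟨ζ0.2.2.1, ζ0.2.1⟩
      have hnwdp : IsNowhereDense (br {ζs, ζ0.val}) :=
        nwd_subset hS (br_pair_mono hSc hSconn hζsS hζ0S)
      have hζsC : ζs ∈ C := hSC hζsS
      have hζsRel : NwdRel z ζs :=
        NwdRel.trans' hX ζ0.2.2.1 (by rwa [br_pair_comm] at hnwdp)
      have hζsP : ∀ m ∈ M, V ⊆ br {m, ζs} := fun m hm =>
        htransfer m ζ0.val ζs (ζ0.2.2.2 m hm) hnwdp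
      refine ⟨⟨ζs, hζsC, hζsRel, hζsP⟩, ?_⟩
      intro a ha
      exact hZfact ζs _ (br_isCompact _)
        (br_isPreconnected hX (hZne a.val)) (hclVZ a.val) (hζsZ a ha)
    have htrans : ∀ {a b c : {ζ : X // P ζ}}, r a b → r b c → r a c :=
      fun h1 h2 => h2.trans h1
    obtain ⟨mx, hmx⟩ := exists_maximal_of_chains_bounded hchains htrans
    set ζM := mx.val with hζMdef
    set Z := br (closure V ∪ {ζM}) with hZdef
    have hZCm : Z ⊆ C := hZC ζM mx.2.1
    have hVZ : V ⊆ Z := subset_closure.trans (hclVZ ζM)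
    have hZcomp : IsCompact Z := br_isCompact _
    have hZconn : IsPreconnected Z := br_isPreconnected hX (hZne ζM)
    have hZnint : (interior Z).Nonempty := hVne.mono (interior_maximal hVZ hVopen)
    refine ⟨Z, hZCm, hZcomp, ⟨hVne.mono hVZ, hZconn⟩, ?_, hZnint⟩
    rintro ⟨H, K, hHc, hHconn, hKc, hKconn, hHZ, hKZ, hHne, hKne, hHK⟩
    have hcore : ∀ H' K' : Set X, IsCompact H' → IsConnected H' → IsCompact K' → IsConnected K' →
        H' ⊆ Z → K' ⊆ Z → H' ≠ Z → K' ≠ Z → H' ∪ K' = Z → ζM ∈ H' → False := by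
      intro H' K' hHc' hHconn' hKc' hKconn' hHZ' hKZ' hHne' hKne' hHK' hζH
      have hs1 : ∀ m ∈ M, m ∉ H' := by
        intro m hm hmH
        have h1 : br {m, ζM} ⊆ H' := br_pair_mono hHc' hHconn'.2 hmH hζH
        have h2 : Z ⊆ br {m, ζM} := hZfact ζM _ (br_isCompact _)
          (br_isPreconnected hX ⟨m, by simp⟩)
          (closure_minimal (mx.2.2.2 m hm) (br_isClosed _))
          mem_br_right
        exact hHne' (Subset.antisymm hHZ' (h2.trans h1))
      have hHnwd : IsNowhereDense H' := by
        rw [hHc'.isClosed.isNowhereDense_iff]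
        by_contra h
        rw [← ne_eq, ← nonempty_iff_ne_empty] at h
        obtain ⟨m, hm1, hm2⟩ := hMdense (interior H') isOpen_interior h
          (interior_subset.trans (hHZ'.trans hZCm))
        exact hs1 m hm2 (interior_subset hm1)
      have hVK : closure V ⊆ K' := by
        have hVsub : V ⊆ closure (V \ H') := by
          intro p hp
          rw [mem_closure_iff]
          intro O hO hpO
          have hON : (O ∩ V).Nonempty := ⟨p, hpO, hp⟩
          have hns : ¬ (O ∩ V ⊆ H') := by
            intro h
            exact hON.ne_empty (open_subset_nwd hHnwd (hO.inter hVopen) h)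
          obtain ⟨q, hq1, hq2⟩ := not_subset.mp hns
          exact ⟨q, hq1.1, hq1.2, hq2⟩
        have hVHK : V \ H' ⊆ K' := by
          intro v hv
          have hvZ : v ∈ Z := hVZ hv.1
          rw [← hHK'] at hvZ
          rcases hvZ with h | h
          · exact absurd h hv.2
          · exact h
        calc closure V ⊆ closure (closure (V \ H')) := closure_mono hVsub
          _ = closure (V \ H') := closure_closure
          _ ⊆ closure K' := closure_mono hVHK
          _ = K' := hKc'.isClosed.closure_eq
      obtain ⟨w, hwH, hwK⟩ : (H' ∩ K').Nonempty := by
        by_contra h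
        rw [not_nonempty_iff_eq_empty] at h
        have hdisj : Disjoint H' K' := disjoint_iff_inter_eq_empty.mpr h
        obtain ⟨U', V'', hU', hV'', hHU', hKV'', hUV''⟩ :=
          SeparatedNhds.of_isCompact_isCompact hHc' hKc' hdisj
        have hZsub : Z ⊆ U' ∪ V'' := by
          intro p hp
          rw [← hHK'] at hp
          rcases hp with hp | hp
          · exact Or.inl (hHU' hp)
          · exact Or.inr (hKV'' hp)
        have := hZconn U' V'' hU' hV'' hZsub ⟨ζM, hζZ ζM, hHU' hζH⟩
          ⟨hKconn'.1.some, hKZ' hKconn'.1.some_mem, hKV'' hKconn'.1.some_mem⟩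
        obtain ⟨q, _, hq1, hq2⟩ := this
        exact (hUV''.le_bot ⟨hq1, hq2⟩ : q ∈ (⊥ : Set X))
      have hwnwd : IsNowhereDense (br {w, ζM}) :=
        nwd_subset hHnwd (br_pair_mono hHc' hHconn'.2 hwH hζH)
      have hwC : w ∈ C := hZCm (hKZ' hwK)
      have hwRel : NwdRel z w :=
        NwdRel.trans' hX mx.2.2.1 (by rwa [br_pair_comm] at hwnwd)
      have hwP : ∀ m ∈ M, V ⊆ br {m, w} := fun m hm =>
        htransfer m ζM w (mx.2.2.2 m hm) hwnwd
      have hZwK : br (closure V ∪ {w}) ⊆ K' :=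
        hZfact w _ hKc' hKconn'.2 hVK hwK
      have hr1 : r mx ⟨w, hwC, hwRel, hwP⟩ := hZwK.trans hKZ'
      have hr2 : r ⟨w, hwC, hwRel, hwP⟩ mx := hmx _ hr1
      have hZK : Z ⊆ K' := hr2.trans hZwK
      exact hKne' (Subset.antisymm hKZ' hZK)
    have hζZ' : ζM ∈ Z := hζZ ζM
    rw [← hHK] at hζZ'
    rcases hζZ' with h | h
    · exact hcore H K hHc hHconn hKc hKconn hHZ hKZ hHne hKne hHK h
    · exact hcore K H hKc hKconn hHc hHconn hKZ hHZ hKne hHne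
        (by rw [union_comm]; exact hHK) h
  · -- direct branch: S has nonempty interior
    have hWne : (interior S).Nonempty := by
      rw [nonempty_iff_ne_empty]
      intro h
      exact hS (hSclosed.isNowhereDense_iff.mpr h)
    obtain ⟨m0, hm0W, hm0M⟩ := hMdense (interior S) isOpen_interior hWne
      (interior_subset.trans hSC)
    have hWS' : ∀ O : Set X, IsOpen O → O.Nonempty → O ⊆ S → (O ∩ (Mz ∩ C)).Nonempty := by
      intro O hO hOne hOS
      obtain ⟨p, hp⟩ := hOne
      exact mem_closure_iff.mp (hOS hp) O hO hp
    obtain ⟨a0, ha0W, ha0⟩ := hWS' (interior S) isOpen_interior hWne interior_subset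
    set T' := br ({a0, m0} : Set X) with hT'def
    have hT'S : T' ⊆ S := br_pair_mono hSc hSconn (interior_subset ha0W) (interior_subset hm0W)
    have hT'C : T' ⊆ C := hT'S.trans hSC
    have ha0M : a0 ∉ M := hzrel a0 ha0.1
    have hT'nnwd : ¬ IsNowhereDense T' := by
      intro h
      apply ha0M
      apply hMofnwd
      have hsub : br {x, a0} ⊆ br {x, m0} ∪ T' := by
        apply br_pair_mono ((br_isCompact _).union (br_isCompact _))
        · exact IsPreconnected.union m0 mem_br_right mem_br_right
            (br_isPreconnected hX ⟨x, by simp⟩) (br_isPreconnected hX ⟨a0, by simp⟩)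
        · exact Or.inl mem_br_left
        · exact Or.inr mem_br_left
      exact nwd_subset (nwd_union (hMnwd m0 hm0M) h) hsub
    set V' := interior T' with hV'def
    have hV'open : IsOpen V' := isOpen_interior
    have hV'ne : V'.Nonempty := by
      rw [nonempty_iff_ne_empty]
      intro h
      exact hT'nnwd (((br_isClosed _).isNowhereDense_iff).mpr h)
    have hV'T' : V' ⊆ T' := interior_subset
    have hV'S : V' ⊆ S := hV'T'.trans hT'S
    have hV'C : V' ⊆ C := hV'S.trans hSC
    set Y := br (closure V') with hYdef
    have hclV'ne : (closure V').Nonempty := hV'ne.mono subset_closure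
    have hYC : Y ⊆ C := br_min hCc hCconn (closure_minimal hV'C hCclosed)
    have hV'Y : V' ⊆ Y := subset_closure.trans subset_br
    have hYint : V' ⊆ interior Y := interior_maximal hV'Y hV'open
    have hkey : ∀ m' ∈ M, ∀ a' ∈ Mz, V' ⊆ br {a', m'} := by
      intro m' hm' a' ha'
      have hw1 : IsNowhereDense (br {a0, a'}) := NwdRel.trans' hX (NwdRel.symm' ha0.1) ha'
      have hw2 : IsNowhereDense (br {m', m0}) :=
        NwdRel.trans' hX (NwdRel.symm' (hMnwd m' hm')) (hMnwd m0 hm0M)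
      have hsub : V' \ br {a', m'} ⊆ br {a0, a'} ∪ br {m', m0} := by
        intro v hv
        have hvT' : v ∈ T' := hV'T' hv.1
        have hbig : T' ⊆ br {a0, a'} ∪ (br {a', m'} ∪ br {m', m0}) := by
          apply br_pair_mono
          · exact (br_isCompact _).union ((br_isCompact _).union (br_isCompact _))
          · exact IsPreconnected.union a' mem_br_right (Or.inl mem_br_left)
              (br_isPreconnected hX ⟨a0, by simp⟩)
              (IsPreconnected.union m' mem_br_right mem_br_left
                (br_isPreconnected hX ⟨a', by simp⟩) (br_isPreconnected hX ⟨m', by simp⟩))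
          · exact Or.inl mem_br_left
          · exact Or.inr (Or.inr mem_br_right)
        rcases hbig hvT' with h | h
        · exact Or.inl h
        · rcases h with h | h
          · exact absurd h hv.2
          · exact Or.inr h
      intro v hv
      by_contra hnB
      have h0 : V' \ br {a', m'} = ∅ :=
        open_subset_nwd (nwd_union hw1 hw2) (hV'open.sdiff (br_isClosed _)) hsub
      have hvv : v ∈ V' \ br {a', m'} := ⟨hv, hnB⟩
      rw [h0] at hvv
      exact hvv
    refine ⟨Y, hYC, br_isCompact _, ⟨hclV'ne.mono subset_br, br_isPreconnected hX hclV'ne⟩,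
      ?_, hV'ne.mono hYint⟩
    rintro ⟨H, K, hHc, hHconn, hKc, hKconn, hHY, hKY, hHne, hKne, hHK⟩
    have hV'H : (V' \ H).Nonempty := by
      rw [nonempty_iff_ne_empty]
      intro h
      apply hHne
      have hsub : V' ⊆ H := by
        intro v hv
        by_contra hvh
        have hvv : v ∈ V' \ H := ⟨hv, hvh⟩
        rw [h] at hvv
        exact hvv
      exact Subset.antisymm hHY (br_min hHc hHconn.2 (closure_minimal hsub hHc.isClosed))
    have hopenVH : IsOpen (V' \ H) := hV'open.sdiff hHc.isClosed
    obtain ⟨mA, hmA1, hmA2⟩ := hMdense (V' \ H) hopenVH hV'H (diff_subset.trans hV'C)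
    obtain ⟨aA, haA1, haA2⟩ := hWS' (V' \ H) hopenVH hV'H (diff_subset.trans hV'S)
    have hmAK : mA ∈ K := by
      have hmy : mA ∈ Y := hV'Y hmA1.1
      rw [← hHK] at hmy
      rcases hmy with h | h
      · exact absurd h hmA1.2
      · exact h
    have haAK : aA ∈ K := by
      have hay : aA ∈ Y := hV'Y haA1.1
      rw [← hHK] at hay
      rcases hay with h | h
      · exact absurd h haA1.2
      · exact h
    have h1 : V' ⊆ br {aA, mA} := hkey mA hmA2 aA haA2.1
    have h2 : Y ⊆ br {aA, mA} :=
      br_min (br_isCompact _) (br_isPreconnected hX ⟨aA, by simp⟩)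
        (closure_minimal h1 (br_isClosed _))
    have h3 : br {aA, mA} ⊆ K := br_pair_mono hKc hKconn.2 haAK hmAK
    exact hKne (Subset.antisymm hKY (h2.trans h3))
end

section
/- Every closed meager composant of a continuum X is an ample subcontinuum of X. -/
open Set Topology Filter

/-! ### Auxiliary lemmas -/

section Aux

variable {Y : Type} [TopologicalSpace Y]

/-- The union of two closed sets with empty interior has empty interior. -/
private lemma interior_union_eq_empty {A B : Set Y} (hA : IsClosed A)
    (hiA : interior A = ∅) (hiB : interior B = ∅) : interior (A ∪ B) = ∅ := by
  have h1 : interior (A ∪ B) \ A ⊆ interior B := by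
    apply interior_maximal
    · rintro r ⟨hr, hrA⟩
      rcases interior_subset hr with h | h
      · exact absurd h hrA
      · exact h
    · exact isOpen_interior.sdiff hA
  have h2 : interior (A ∪ B) ⊆ A := by
    intro r hr
    by_contra hrA
    have : r ∈ interior B := h1 ⟨hr, hrA⟩
    rw [hiB] at this
    exact this
  have h3 : interior (A ∪ B) ⊆ interior A := interior_maximal h2 isOpen_interior
  rw [hiA] at h3
  exact eq_empty_iff_forall_notMem.2 fun r hr => h3 hr

/-- Boundary bumping: in a connected compact Hausdorff space, the connected component of a
point in a proper closed subset meets the frontier of that subset. -/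
private lemma boundary_bump [CompactSpace Y] [T2Space Y] [ConnectedSpace Y]
    {F : Set Y} (hF : IsClosed F) (hFne : F ≠ univ) {p : Y} (hp : p ∈ F) :
    (connectedComponentIn F p ∩ frontier F).Nonempty := by
  by_contra hcon
  rw [not_nonempty_iff_eq_empty] at hcon
  haveI : CompactSpace F := isCompact_iff_compactSpace.1 hF.isCompact
  set p' : F := ⟨p, hp⟩ with hp'def
  set B : Set F := Subtype.val ⁻¹' frontier F with hBdef
  have hBclosed : IsClosed B := isClosed_frontier.preimage continuous_subtype_val
  have hBint : B ∩ ⋂ Z : { Z : Set F // IsClopen Z ∧ p' ∈ Z }, (Z : Set F) = ∅ := by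
    rw [← connectedComponent_eq_iInter_isClopen p']
    rw [eq_empty_iff_forall_notMem]
    rintro z ⟨hzB, hzc⟩
    have hzmem : (z : Y) ∈ connectedComponentIn F p ∩ frontier F := by
      rw [connectedComponentIn_eq_image hp]
      exact ⟨⟨z, hzc, rfl⟩, hzB⟩
    rw [hcon] at hzmem
    exact hzmem
  obtain ⟨t, ht⟩ := hBclosed.isCompact.elim_finite_subfamily_closed _
    (fun Z : { Z : Set F // IsClopen Z ∧ p' ∈ Z } => Z.2.1.1) hBint
  set W' : Set F := ⋂ Z ∈ t, (Z : Set F) with hW'def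
  have hW'clopen : IsClopen W' := isClopen_biInter_finset fun Z _ => Z.2.1
  have hpW' : p' ∈ W' := mem_iInter₂.2 fun Z _ => Z.2.2
  set W : Set Y := Subtype.val '' W' with hWdef
  have hWF : W ⊆ F := by rintro _ ⟨z, _, rfl⟩; exact z.2
  have hWfr : ∀ q ∈ W, q ∉ frontier F := by
    rintro _ ⟨z, hz, rfl⟩ hfr
    have : z ∈ B ∩ ⋂ Z ∈ t, (Z : Set F) := ⟨hfr, hz⟩
    rw [ht] at this
    exact this
  have hWint : W ⊆ interior F := by
    intro q hq
    have hqF : q ∈ F := hWF hq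
    by_contra hqint
    exact hWfr q hq (hF.frontier_eq ▸ ⟨hqF, hqint⟩)
  have hWclosed : IsClosed W := (hW'clopen.1.isCompact.image continuous_subtype_val).isClosed
  have hWopen : IsOpen W := by
    obtain ⟨O, hO, hOpre⟩ := isOpen_induced_iff.1 hW'clopen.2
    have hWeq : W = O ∩ interior F := by
      ext q
      constructor
      · rintro ⟨z, hz, rfl⟩
        refine ⟨?_, hWint ⟨z, hz, rfl⟩⟩
        have : z ∈ Subtype.val ⁻¹' O := by rw [hOpre]; exact hz
        exact this
      · rintro ⟨hqO, hqint⟩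
        have hqF : q ∈ F := interior_subset hqint
        refine ⟨⟨q, hqF⟩, ?_, rfl⟩
        rw [← hOpre]
        exact hqO
    rw [hWeq]
    exact hO.inter isOpen_interior
  have hWclopen : IsClopen W := ⟨hWclosed, hWopen⟩
  have hWuniv : W = univ := hWclopen.eq_univ ⟨p, ⟨p', hpW', rfl⟩⟩
  exact hFne (eq_univ_of_univ_subset (hWuniv ▸ hWF))

end Aux

section Limsup

variable {X : Type} [MetricSpace X] [CompactSpace X]

/-- The topological limit superior of a sequence of sets. -/
private def limsupSet (C : ℕ → Set X) : Set X :=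
  ⋂ m, closure (⋃ n, ⋃ (_ : m ≤ n), C n)

private lemma isClosed_limsupSet (C : ℕ → Set X) : IsClosed (limsupSet C) :=
  isClosed_iInter fun _ => isClosed_closure

private lemma mem_limsupSet_of_subseq {C : ℕ → Set X} {q : ℕ → X} {z : X} {φ : ℕ → ℕ}
    (hφ : StrictMono φ) (hq : ∀ k, q k ∈ C (φ k)) (hz : Tendsto q atTop (𝓝 z)) :
    z ∈ limsupSet C := by
  refine mem_iInter.2 fun m => mem_closure_of_tendsto hz ?_
  filter_upwards [eventually_ge_atTop m] with k hk
  exact mem_iUnion₂.2 ⟨φ k, le_trans hk hφ.le_apply, hq k⟩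

private lemma limsupSet_subset {C : ℕ → Set X} {F : Set X} (hF : IsClosed F)
    (h : ∀ n, C n ⊆ F) : limsupSet C ⊆ F := by
  refine (iInter_subset _ 0).trans ?_
  rw [← hF.closure_eq]
  exact closure_mono (iUnion₂_subset fun n _ => h n)

/-- Kuratowski: the limit superior of a sequence of preconnected sets whose "lim inf" is
nonempty (witnessed by a convergent selection) is preconnected. -/
private lemma isPreconnected_limsupSet {C : ℕ → Set X} (hC : ∀ n, IsPreconnected (C n))
    {w : ℕ → X} (hw : ∀ n, w n ∈ C n) {y : X} (hwy : Tendsto w atTop (𝓝 y)) :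
    IsPreconnected (limsupSet C) := by
  set S := limsupSet C with hSdef
  have hyS : y ∈ S := mem_limsupSet_of_subseq strictMono_id hw hwy
  have hScl : IsClosed S := isClosed_limsupSet C
  rintro u v hu hv hsub ⟨a, haS, hau⟩ ⟨b, hbS, hbv⟩
  by_contra hcon
  rw [not_nonempty_iff_eq_empty] at hcon
  have hnot : ∀ p ∈ S, ¬(p ∈ u ∧ p ∈ v) := by
    rintro p hp ⟨h1, h2⟩
    exact eq_empty_iff_forall_notMem.1 hcon p ⟨hp, h1, h2⟩
  have hA : IsCompact (S \ v) := (hScl.sdiff hv).isCompact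
  have hB : IsCompact (S \ u) := (hScl.sdiff hu).isCompact
  have hdis : Disjoint (S \ v) (S \ u) := by
    rw [Set.disjoint_left]
    rintro p ⟨hpS, hpv⟩ ⟨_, hpu⟩
    rcases hsub hpS with h | h
    · exact hpu h
    · exact hpv h
  obtain ⟨UA, UB, hUAo, hUBo, hAU, hBU, hUdis⟩ :=
    SeparatedNhds.of_isCompact_isCompact hA hB hdis
  have hSA : ∀ p ∈ S, p ∈ u → p ∈ UA := by
    intro p hp hpu
    exact hAU ⟨hp, fun hpv => hnot p hp ⟨hpu, hpv⟩⟩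
  have hSB : ∀ p ∈ S, p ∈ v → p ∈ UB := by
    intro p hp hpv
    exact hBU ⟨hp, fun hpu => hnot p hp ⟨hpu, hpv⟩⟩
  have hSsub : S ⊆ UA ∪ UB := by
    intro p hp
    rcases hsub hp with h | h
    · exact Or.inl (hSA p hp h)
    · exact Or.inr (hSB p hp h)
  -- eventually, `C n` is contained in `UA ∪ UB`
  have hev : ∀ᶠ n in atTop, C n ⊆ UA ∪ UB := by
    by_contra hfr
    rw [Filter.not_eventually] at hfr
    have hfr' : ∃ᶠ n in atTop, ∃ q, q ∈ C n ∧ q ∉ UA ∪ UB :=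
      hfr.mono fun n hn => Set.not_subset.1 hn
    obtain ⟨φ, hφ, hq⟩ := Filter.extraction_of_frequently_atTop hfr'
    choose q hqC hqn using hq
    obtain ⟨z, φ2, hφ2, hz⟩ := CompactSpace.tendsto_subseq q
    have hzS : z ∈ S :=
      mem_limsupSet_of_subseq (hφ.comp hφ2) (fun k => hqC (φ2 k)) hz
    have hzn : z ∉ UA ∪ UB :=
      (hUAo.union hUBo).isClosed_compl.mem_of_tendsto hz
        (Eventually.of_forall fun k => hqn (φ2 k))
    exact hzn (hSsub hzS)
  -- frequently, `C n` meets a given open set around a point of `S`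
  have hfreq : ∀ (O : Set X), IsOpen O → ∀ p ∈ S, p ∈ O →
      ∃ᶠ n in atTop, (C n ∩ O).Nonempty := by
    intro O hO p hp hpO
    rw [Filter.frequently_atTop]
    intro m
    have hpcl : p ∈ closure (⋃ n, ⋃ (_ : m ≤ n), C n) := mem_iInter.1 hp m
    obtain ⟨r, hrO, hrU⟩ := _root_.mem_closure_iff.1 hpcl O hO hpO
    obtain ⟨n, hn, hrC⟩ := mem_iUnion₂.1 hrU
    exact ⟨n, hn, r, hrC, hrO⟩
  rcases hsub hyS with hyu | hyv
  · -- `y ∈ u`, so eventually `w n ∈ UA`; `b` gives points of `C n` frequently in `UB`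
    have hyUA : y ∈ UA := hSA y hyS hyu
    have hevw : ∀ᶠ n in atTop, w n ∈ UA := hwy.eventually (hUAo.eventually_mem hyUA)
    have hbUB : b ∈ UB := hSB b hbS hbv
    obtain ⟨n, ⟨h1, h2⟩, h3⟩ :=
      ((hev.and hevw).and_frequently (hfreq UB hUBo b hbS hbUB)).exists
    obtain ⟨r, _, hrA, hrB⟩ := hC n UA UB hUAo hUBo h1 ⟨w n, hw n, h2⟩
      (h3.imp fun r hr => ⟨hr.1, hr.2⟩)
    exact Set.disjoint_left.1 hUdis hrA hrB
  · -- symmetric case: `y ∈ v`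
    have hyUB : y ∈ UB := hSB y hyS hyv
    have hevw : ∀ᶠ n in atTop, w n ∈ UB := hwy.eventually (hUBo.eventually_mem hyUB)
    have haUA : a ∈ UA := hSA a haS hau
    obtain ⟨n, ⟨h1, h2⟩, h3⟩ :=
      ((hev.and hevw).and_frequently (hfreq UA hUAo a haS haUA)).exists
    obtain ⟨r, _, hrA, hrB⟩ := hC n UA UB hUAo hUBo h1
      (h3.imp fun r hr => ⟨hr.1, hr.2⟩) ⟨w n, hw n, h2⟩
    exact Set.disjoint_left.1 hUdis hrA hrB

end Limsup

/-- Every closed meager composant of a continuum is an ample subcontinuum. -/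
theorem closed_meagerComposant_ample (X : Type) [MetricSpace X] [CompactSpace X] [ConnectedSpace X] [Nonempty X] (x : X)
    (hclosed : IsClosed (MeagerComposant X x)) :
    IsCompact (MeagerComposant X x) ∧ IsPreconnected (MeagerComposant X x) ∧
      Ample (MeagerComposant X x) := by
  set M := MeagerComposant X x with hMdef
  have hMcpt : IsCompact M := hclosed.isCompact
  have hMpc : IsPreconnected M :=
    isPreconnected_sUnion x _ (fun L hL => hL.2.2.2) (fun L hL => hL.2.1.isPreconnected)
  refine ⟨hMcpt, hMpc, ?_⟩
  intro U hU hMU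
  by_cases hUuniv : U = univ
  · exact ⟨univ, isCompact_univ, isPreconnected_univ, by simp, by simp [hUuniv]⟩
  rcases eq_empty_or_nonempty M with hMe | hMne
  · exact ⟨∅, isCompact_empty, isPreconnected_empty, by simp [hMe], empty_subset U⟩
  have hxM : x ∈ M := by
    obtain ⟨p, L, hL, _⟩ := hMne
    exact mem_sUnion.2 ⟨L, hL, hL.2.2.2⟩
  -- shrink `U` to an open `V` with `M ⊆ V ⊆ closure V ⊆ U`
  obtain ⟨V, hVopen, hMV, hclV⟩ := normal_exists_closure_subset hclosed hU hMU
  set F := closure V with hFdef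
  have hF : IsClosed F := isClosed_closure
  have hVF : V ⊆ F := subset_closure
  have hFU : F ⊆ U := hclV
  have hFne : F ≠ univ := fun h => hUuniv (eq_univ_of_univ_subset (h ▸ hFU))
  have hVint : V ⊆ interior F := interior_maximal hVF hVopen
  have hxF : x ∈ F := hVF (hMV hxM)
  set K := connectedComponentIn F x with hKdef
  have hKF : K ⊆ F := connectedComponentIn_subset F x
  have hKpc : IsPreconnected K := isPreconnected_connectedComponentIn
  have hKclosed : IsClosed K := by
    apply isClosed_of_closure_subset
    exact hKpc.closure.subset_connectedComponentIn
      (subset_closure (mem_connectedComponentIn hxF))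
      (closure_minimal hKF hF)
  have hMK : M ⊆ K := hMpc.subset_connectedComponentIn hxM (hMV.trans hVF)
  refine ⟨K, hKclosed.isCompact, hKpc, ?_, hKF.trans hFU⟩
  -- it remains to show `M ⊆ interior K`; suppose not
  by_contra hMint
  obtain ⟨y, hyM, hyint⟩ := Set.not_subset.1 hMint
  have hyK : y ∈ K := hMK hyM
  -- `y` is a limit of points outside `K`
  have hycl : y ∈ closure Kᶜ := by
    rw [closure_compl]
    exact hyint
  obtain ⟨z, hzK, hzy⟩ := mem_closure_iff_seq_limit.1 hycl
  -- eventually the points are in `V`; shift the sequence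
  obtain ⟨N, hN⟩ := eventually_atTop.1 (hzy.eventually (hVopen.eventually_mem (hMV hyM)))
  set w : ℕ → X := fun n => z (n + N) with hwdef
  have hwV : ∀ n, w n ∈ V := fun n => hN (n + N) (Nat.le_add_left N n)
  have hwK : ∀ n, w n ∉ K := fun n => hzK (n + N)
  have hwy : Tendsto w atTop (𝓝 y) := hzy.comp (tendsto_add_atTop_nat N)
  set C : ℕ → Set X := fun n => connectedComponentIn F (w n) with hCdef
  have hwC : ∀ n, w n ∈ C n := fun n => mem_connectedComponentIn (hVF (hwV n))
  have hCK : ∀ n, ∀ q ∈ C n, q ∉ K := by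
    intro n q hqC hqK
    have h1 : C n = connectedComponentIn F q := connectedComponentIn_eq hqC
    have h2 : K = connectedComponentIn F q := connectedComponentIn_eq hqK
    exact hwK n (h2 ▸ h1 ▸ hwC n)
  set S := limsupSet C with hSdef
  have hSclosed : IsClosed S := isClosed_limsupSet C
  have hSpc : IsPreconnected S :=
    isPreconnected_limsupSet (fun n => isPreconnected_connectedComponentIn) hwC hwy
  have hyS : y ∈ S := mem_limsupSet_of_subseq strictMono_id hwC hwy
  have hSF : S ⊆ F := limsupSet_subset hF fun n => connectedComponentIn_subset F (w n)
  have hSK : S ⊆ K := by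
    have h1 : S ⊆ connectedComponentIn F y := hSpc.subset_connectedComponentIn hyS hSF
    have h2 : K = connectedComponentIn F y := connectedComponentIn_eq hyK
    rw [h2]
    exact h1
  -- `S` has empty interior
  have hSint : interior S = ∅ := by
    rw [eq_empty_iff_forall_notMem]
    intro q hq
    have hqS : q ∈ S := interior_subset hq
    have hqcl : q ∈ closure (⋃ n, ⋃ (_ : 0 ≤ n), C n) := mem_iInter.1 hqS 0
    obtain ⟨r, hrO, hrU⟩ := _root_.mem_closure_iff.1 hqcl _ isOpen_interior hq
    obtain ⟨n, _, hrC⟩ := mem_iUnion₂.1 hrU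
    exact hCK n r hrC (hSK (interior_subset hrO))
  -- `S` meets the frontier of `F`
  have hbb : ∀ n, (C n ∩ frontier F).Nonempty :=
    fun n => boundary_bump hF hFne (hVF (hwV n))
  choose p hp1 hp2 using hbb
  obtain ⟨z', φ, hφ, hz'⟩ := CompactSpace.tendsto_subseq p
  have hz'fr : z' ∈ frontier F :=
    isClosed_frontier.mem_of_tendsto hz' (Eventually.of_forall fun k => hp2 (φ k))
  have hz'S : z' ∈ S := mem_limsupSet_of_subseq hφ (fun k => hp1 (φ k)) hz'
  -- but `S ⊆ M`, since `S` together with a nowhere dense continuum through `x` and `y`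
  -- is a nowhere dense continuum containing `x`
  obtain ⟨L, ⟨hLc, hLconn, hLnwd, hxL⟩, hyL⟩ := mem_sUnion.1 hyM
  have hTc : IsCompact (L ∪ S) := hLc.union hSclosed.isCompact
  have hTconn : IsConnected (L ∪ S) :=
    IsConnected.union ⟨y, hyL, hyS⟩ hLconn ⟨⟨y, hyS⟩, hSpc⟩
  have hTnwd : IsNowhereDense (L ∪ S) := by
    rw [(hLc.isClosed.union hSclosed).isNowhereDense_iff]
    exact interior_union_eq_empty hLc.isClosed
      (hLc.isClosed.isNowhereDense_iff.1 hLnwd) hSint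
  have hSM : S ⊆ M :=
    fun s hs => mem_sUnion.2 ⟨L ∪ S, ⟨hTc, hTconn, hTnwd, Or.inl hxL⟩, Or.inr hs⟩
  have hz'int : z' ∈ interior F := hVint (hMV (hSM hz'S))
  rw [hF.frontier_eq] at hz'fr
  exact hz'fr.2 hz'int
end
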